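/- arXiv:1204.1317 — 3 statements merged into one kernel-verified Lean document; each statement's English description precedes it below -/
import Mathlib

section
/- Assume additionally r > 0, q ≥ 0 and 0 < β < 1. Let f : O → ℝ be continuous and obey the elliptic growth condition, and let g : ∂O → ℝ be continuous and obey the elliptic growth condition. If u₁ and u₂ are both continuous on cl(O), twice continuously differentiable on O, obey the elliptic growth condition on O, and satisfy A uᵢ = f on O and uᵢ = g on ∂O (i = 1, 2), then u₁ = u₂ on cl(O). -/
open Real Set MeasureTheory

noncomputable section

/-- First directional derivative of `u` at `z` in direction `v`. -/
def D1 (u : ℝ × ℝ → ℝ) (z v : ℝ × ℝ) : ℝ := fderiv ℝ u z v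

/-- Second directional derivative of `u` at `z` in directions `v`, `w`. -/
def D2 (u : ℝ × ℝ → ℝ) (z v w : ℝ × ℝ) : ℝ := fderiv ℝ (fun z' => fderiv ℝ u z' v) z w

/-- The elliptic Heston operator
`(Au)(x,y) = −(y/2)(u_xx + 2ρσ u_xy + σ² u_yy) − (r − q − y/2) u_x − κ(θ − y) u_y + r u`. -/
def hestonA (σ ρ κ θ q r : ℝ) (u : ℝ × ℝ → ℝ) (z : ℝ × ℝ) : ℝ :=
  -(z.2 / 2) * (D2 u z (1, 0) (1, 0) + 2 * ρ * σ * D2 u z (1, 0) (0, 1)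
      + σ ^ 2 * D2 u z (0, 1) (0, 1))
    - (r - q - z.2 / 2) * D1 u z (1, 0) - κ * (θ - z.2) * D1 u z (0, 1) + r * u z

/-- The open upper half-plane `ℍ = ℝ × (0,∞)`. -/
def HH : Set (ℝ × ℝ) := {z | 0 < z.2}

/-- `Γ₁ = ∂O ∩ ℍ`. -/
def Gamma1 (O : Set (ℝ × ℝ)) : Set (ℝ × ℝ) := frontier O ∩ HH

/-- `Γ₀`: the interior, relative to `∂ℍ = ℝ × {0}`, of `∂ℍ ∩ ∂O`. -/
def Gamma0 (O : Set (ℝ × ℝ)) : Set (ℝ × ℝ) :=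
  {z | z.2 = 0 ∧ z.1 ∈ interior {x : ℝ | (x, (0 : ℝ)) ∈ frontier O}}

/-- The elliptic growth condition: `|v(x,y)| ≤ C (1 + e^{M₁ y} + e^{M₂ x})` on `S`,
with `0 ≤ M₁ < min (r/(κθ)) μ`, `μ = 2κ/σ²`, and `M₂ ∈ [0,1)`. -/
def ellGrowth (σ κ θ r : ℝ) (S : Set (ℝ × ℝ)) (v : ℝ × ℝ → ℝ) : Prop :=
  ∃ C M₁ M₂ : ℝ, 0 < C ∧ 0 ≤ M₁ ∧ M₁ < min (r / (κ * θ)) (2 * κ / σ ^ 2) ∧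
    0 ≤ M₂ ∧ M₂ < 1 ∧ ∀ z ∈ S, |v z| ≤ C * (1 + exp (M₁ * z.2) + exp (M₂ * z.1))

namespace HestonAux

open Filter Topology

/-! ### Exponential comparison functions -/

/-- The continuous linear functional `z ↦ α z.1 + β z.2`. -/
def Lmap (α β : ℝ) : (ℝ × ℝ) →L[ℝ] ℝ :=
  α • (ContinuousLinearMap.fst ℝ ℝ ℝ) + β • (ContinuousLinearMap.snd ℝ ℝ ℝ)

@[simp] lemma Lmap_apply (α β : ℝ) (z : ℝ × ℝ) : Lmap α β z = α * z.1 + β * z.2 := by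
  simp [Lmap]

/-- `e^{αx + βy}`. -/
def eFun (α β : ℝ) : ℝ × ℝ → ℝ := fun z => Real.exp (α * z.1 + β * z.2)

lemma eFun_pos (α β : ℝ) (z : ℝ × ℝ) : 0 < eFun α β z := exp_pos _

lemma hasFDerivAt_eFun (α β : ℝ) (z : ℝ × ℝ) :
    HasFDerivAt (eFun α β) (eFun α β z • Lmap α β) z := by
  have h1 : HasFDerivAt (fun z : ℝ × ℝ => (Lmap α β) z) (Lmap α β) z :=
    (Lmap α β).hasFDerivAt
  have h2 := (Real.hasDerivAt_exp ((Lmap α β) z)).comp_hasFDerivAt z h1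
  have : (Real.exp ∘ fun z : ℝ × ℝ => (Lmap α β) z) = eFun α β := by
    funext w; simp [eFun, Function.comp]
  rw [this] at h2
  simpa [eFun] using h2

lemma fderiv_eFun (α β : ℝ) (z : ℝ × ℝ) :
    fderiv ℝ (eFun α β) z = eFun α β z • Lmap α β :=
  (hasFDerivAt_eFun α β z).fderiv

lemma contDiff_eFun (α β : ℝ) : ContDiff ℝ 2 (eFun α β) := by
  have : eFun α β = Real.exp ∘ (fun z : ℝ × ℝ => (Lmap α β) z) := by
    funext w; simp [eFun, Function.comp]
  rw [this]
  exact (Real.contDiff_exp.of_le le_top).comp ((Lmap α β).contDiff.of_le le_top)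

@[simp] lemma D1_eFun (α β : ℝ) (z v : ℝ × ℝ) :
    D1 (eFun α β) z v = (α * v.1 + β * v.2) * eFun α β z := by
  simp [D1, fderiv_eFun]; ring

lemma D2_eFun (α β : ℝ) (z v w : ℝ × ℝ) :
    D2 (eFun α β) z v w = (α * v.1 + β * v.2) * ((α * w.1 + β * w.2) * eFun α β z) := by
  have hfun : (fun z' => fderiv ℝ (eFun α β) z' v)
      = fun z' => (α * v.1 + β * v.2) * eFun α β z' := by
    funext z'; simp [fderiv_eFun]; ring
  have hd : HasFDerivAt (fun z' => (α * v.1 + β * v.2) * eFun α β z')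
      ((α * v.1 + β * v.2) • (eFun α β z • Lmap α β)) z :=
    (hasFDerivAt_eFun α β z).const_mul (α * v.1 + β * v.2)
  rw [D2, hfun, hd.fderiv]
  simp only [ContinuousLinearMap.smul_apply, Lmap_apply, smul_eq_mul]
  ring

lemma hestonA_eFun (σ ρ κ θ q r α β : ℝ) (z : ℝ × ℝ) :
    hestonA σ ρ κ θ q r (eFun α β) z =
      (((-(1/2) * (α^2 + 2*ρ*σ*(α*β) + σ^2*β^2) + α/2 + κ*β) * z.2
        + (-(r-q)*α - κ*θ*β + r)) * eFun α β z) := by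
  simp only [hestonA, D1_eFun, D2_eFun]
  ring

/-! ### Calculus helpers for `D1`, `D2` -/

lemma diffAt_fderiv_apply {f : ℝ × ℝ → ℝ} {z : ℝ × ℝ} (hf : ContDiffAt ℝ 2 f z) (v : ℝ × ℝ) :
    DifferentiableAt ℝ (fun z' => fderiv ℝ f z' v) z := by
  have h1 : ContDiffAt ℝ 1 (fderiv ℝ f) z := hf.fderiv_right (by norm_num)
  exact (h1.differentiableAt one_ne_zero).clm_apply (differentiableAt_const v)

variable {f g w φ : ℝ × ℝ → ℝ} {U : Set (ℝ × ℝ)} {z : ℝ × ℝ}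

/-- `D2` in terms of the full second derivative. -/
lemma D2_eq_snd (hf : ContDiffAt ℝ 2 f z) (v u : ℝ × ℝ) :
    D2 f z v u = fderiv ℝ (fderiv ℝ f) z u v := by
  have h1 : ContDiffAt ℝ 1 (fderiv ℝ f) z := hf.fderiv_right (by norm_num)
  rw [D2, fderiv_clm_apply (h1.differentiableAt one_ne_zero) (differentiableAt_const v)]
  simp

lemma D1_add (hf : DifferentiableAt ℝ f z) (hg : DifferentiableAt ℝ g z) (v : ℝ × ℝ) :
    D1 (fun z' => f z' + g z') z v = D1 f z v + D1 g z v := by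
  rw [D1, fderiv_fun_add hf hg]; simp [D1]

lemma D2_add (hf : ContDiff ℝ 2 f) (hg : ContDiff ℝ 2 g) (v u : ℝ × ℝ) :
    D2 (fun z' => f z' + g z') z v u = D2 f z v u + D2 g z v u := by
  have h1 : (fun z' => fderiv ℝ (fun y => f y + g y) z' v)
      = fun z' => fderiv ℝ f z' v + fderiv ℝ g z' v := by
    funext z'
    rw [fderiv_fun_add ((hf.differentiable two_ne_zero).differentiableAt)
      ((hg.differentiable two_ne_zero).differentiableAt)]
    simp
  have hfv : DifferentiableAt ℝ (fun z' => fderiv ℝ f z' v) z :=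
    diffAt_fderiv_apply hf.contDiffAt v
  have hgv : DifferentiableAt ℝ (fun z' => fderiv ℝ g z' v) z :=
    diffAt_fderiv_apply hg.contDiffAt v
  rw [D2, h1, fderiv_fun_add hfv hgv]
  simp [D2]

lemma hestonA_add (σ ρ κ θ q r : ℝ) (hf : ContDiff ℝ 2 f) (hg : ContDiff ℝ 2 g) :
    hestonA σ ρ κ θ q r (fun z' => f z' + g z') z
      = hestonA σ ρ κ θ q r f z + hestonA σ ρ κ θ q r g z := by
  simp only [hestonA, D1_add ((hf.differentiable two_ne_zero).differentiableAt)
    ((hg.differentiable two_ne_zero).differentiableAt), D2_add hf hg]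
  ring

/-- linear combination `w - ε φ`: first derivative. -/
lemma D1_comb (hw : DifferentiableAt ℝ w z) (hφ : DifferentiableAt ℝ φ z) (ε : ℝ) (v : ℝ × ℝ) :
    D1 (fun z' => w z' - ε * φ z') z v = D1 w z v - ε * D1 φ z v := by
  rw [D1, fderiv_fun_sub hw (hφ.const_mul ε), fderiv_const_mul hφ ε]
  simp [D1]

/-- linear combination `w - ε φ`: second derivative. -/
lemma D2_comb (hU : IsOpen U) (hz : z ∈ U) (hw : ContDiffOn ℝ 2 w U) (hφ : ContDiff ℝ 2 φ)
    (ε : ℝ) (v u : ℝ × ℝ) :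
    D2 (fun z' => w z' - ε * φ z') z v u = D2 w z v u - ε * D2 φ z v u := by
  have h1 : (fun z' => fderiv ℝ (fun y => w y - ε * φ y) z' v)
      =ᶠ[𝓝 z] fun z' => fderiv ℝ w z' v - ε * fderiv ℝ φ z' v := by
    filter_upwards [hU.eventually_mem hz] with z' hz'
    have hw' : DifferentiableAt ℝ w z' :=
      (hw.contDiffAt (hU.mem_nhds hz')).differentiableAt two_ne_zero
    have hφ' : DifferentiableAt ℝ φ z' := (hφ.differentiable two_ne_zero).differentiableAt
    rw [fderiv_fun_sub hw' (hφ'.const_mul ε), fderiv_const_mul hφ' ε]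
    simp
  have hwv : DifferentiableAt ℝ (fun z' => fderiv ℝ w z' v) z :=
    diffAt_fderiv_apply (hw.contDiffAt (hU.mem_nhds hz)) v
  have hφv : DifferentiableAt ℝ (fun z' => fderiv ℝ φ z' v) z :=
    diffAt_fderiv_apply hφ.contDiffAt v
  rw [D2, h1.fderiv_eq, fderiv_fun_sub hwv (hφv.const_mul ε), fderiv_const_mul hφv ε]
  simp [D2]

/-- difference `u₁ - u₂`: first derivative. -/
lemma D1_sub {u₁ u₂ : ℝ × ℝ → ℝ} (h₁ : DifferentiableAt ℝ u₁ z) (h₂ : DifferentiableAt ℝ u₂ z)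
    (v : ℝ × ℝ) : D1 (fun z' => u₁ z' - u₂ z') z v = D1 u₁ z v - D1 u₂ z v := by
  rw [D1, fderiv_fun_sub h₁ h₂]
  simp [D1]

/-- difference `u₁ - u₂`: second derivative. -/
lemma D2_sub {u₁ u₂ : ℝ × ℝ → ℝ} (hU : IsOpen U) (hz : z ∈ U)
    (h₁ : ContDiffOn ℝ 2 u₁ U) (h₂ : ContDiffOn ℝ 2 u₂ U) (v u : ℝ × ℝ) :
    D2 (fun z' => u₁ z' - u₂ z') z v u = D2 u₁ z v u - D2 u₂ z v u := by
  have h1 : (fun z' => fderiv ℝ (fun y => u₁ y - u₂ y) z' v)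
      =ᶠ[𝓝 z] fun z' => fderiv ℝ u₁ z' v - fderiv ℝ u₂ z' v := by
    filter_upwards [hU.eventually_mem hz] with z' hz'
    have h₁' : DifferentiableAt ℝ u₁ z' :=
      (h₁.contDiffAt (hU.mem_nhds hz')).differentiableAt two_ne_zero
    have h₂' : DifferentiableAt ℝ u₂ z' :=
      (h₂.contDiffAt (hU.mem_nhds hz')).differentiableAt two_ne_zero
    rw [fderiv_fun_sub h₁' h₂']
    simp
  have h₁v : DifferentiableAt ℝ (fun z' => fderiv ℝ u₁ z' v) z :=
    diffAt_fderiv_apply (h₁.contDiffAt (hU.mem_nhds hz)) v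
  have h₂v : DifferentiableAt ℝ (fun z' => fderiv ℝ u₂ z' v) z :=
    diffAt_fderiv_apply (h₂.contDiffAt (hU.mem_nhds hz)) v
  rw [D2, h1.fderiv_eq, fderiv_fun_sub h₁v h₂v]
  simp [D2]

lemma hestonA_sub {u₁ u₂ : ℝ × ℝ → ℝ} (σ ρ κ θ q r : ℝ) (hU : IsOpen U) (hz : z ∈ U)
    (h₁ : ContDiffOn ℝ 2 u₁ U) (h₂ : ContDiffOn ℝ 2 u₂ U) :
    hestonA σ ρ κ θ q r (fun z' => u₁ z' - u₂ z') z
      = hestonA σ ρ κ θ q r u₁ z - hestonA σ ρ κ θ q r u₂ z := by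
  have hd₁ : DifferentiableAt ℝ u₁ z :=
    (h₁.contDiffAt (hU.mem_nhds hz)).differentiableAt two_ne_zero
  have hd₂ : DifferentiableAt ℝ u₂ z :=
    (h₂.contDiffAt (hU.mem_nhds hz)).differentiableAt two_ne_zero
  simp only [hestonA, D1_sub hd₁ hd₂, D2_sub hU hz h₁ h₂]
  ring

/-! ### Second-derivative test -/

lemma diffAt_deriv {g : ℝ → ℝ} (hg : ContDiffAt ℝ 2 g 0) : DifferentiableAt ℝ (deriv g) 0 := by
  have h1 : ContDiffAt ℝ 1 (fderiv ℝ g) 0 := hg.fderiv_right (by norm_num)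
  have h2 : DifferentiableAt ℝ (fun t => fderiv ℝ g t 1) 0 :=
    (h1.differentiableAt one_ne_zero).clm_apply (differentiableAt_const 1)
  have : (fun t => fderiv ℝ g t 1) = deriv g := by
    funext t; exact fderiv_apply_one_eq_deriv
  rwa [this] at h2

lemma oneD_secondDeriv_test {g : ℝ → ℝ} (hg : ContDiffAt ℝ 2 g 0) (hmax : IsLocalMax g 0) :
    deriv (deriv g) 0 ≤ 0 := by
  by_contra hlt
  push_neg at hlt
  have h0 : deriv g 0 = 0 := hmax.deriv_eq_zero
  have hd : HasDerivAt (deriv g) (deriv (deriv g) 0) 0 := (diffAt_deriv hg).hasDerivAt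
  have hslope := hasDerivAt_iff_tendsto_slope.mp hd
  have hpos : ∀ᶠ t in 𝓝[≠] (0:ℝ), 0 < slope (deriv g) 0 t :=
    hslope.eventually (eventually_gt_nhds hlt)
  rw [eventually_nhdsWithin_iff] at hpos
  have hev : ∀ᶠ t in 𝓝 (0:ℝ), ContDiffAt ℝ 2 g t := hg.eventually (by simp)
  have hall := (hpos.and hev).and hmax
  rcases Metric.eventually_nhds_iff.mp hall with ⟨ε, hε, hballP⟩
  set δ := ε / 2 with hδdef
  have hδ : 0 < δ := by positivity
  have hballP' : ∀ t : ℝ, |t| < ε →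
      ((t ∈ ({0}ᶜ : Set ℝ) → 0 < slope (deriv g) 0 t) ∧ ContDiffAt ℝ 2 g t) ∧ g t ≤ g 0 := by
    intro t ht
    have : dist t 0 < ε := by simpa [Real.dist_eq] using ht
    exact hballP this
  have hcont : ContinuousOn g (Icc 0 δ) := by
    intro t ht
    have habs : |t| < ε := by
      rw [abs_lt]; constructor <;> [linarith [ht.1]; linarith [ht.2, half_lt_self hε]]
    exact (hballP' t habs).1.2.continuousAt.continuousWithinAt
  have hderivpos : ∀ t ∈ interior (Icc (0:ℝ) δ), 0 < deriv g t := by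
    intro t ht
    rw [interior_Icc] at ht
    have habs : |t| < ε := by
      rw [abs_lt]; constructor <;> [linarith [ht.1]; linarith [ht.2, half_lt_self hε]]
    have hne : t ∈ ({0}ᶜ : Set ℝ) := by simp; linarith [ht.1]
    have hs := ((hballP' t habs).1.1) hne
    have hslope_eq : slope (deriv g) 0 t = deriv g t / t := by
      simp [slope, h0, div_eq_inv_mul]
    rw [hslope_eq] at hs
    have htpos : (0:ℝ) < t := ht.1
    have h' := mul_pos hs htpos
    rwa [div_mul_cancel₀ _ (ne_of_gt htpos)] at h'
  have hmono := strictMonoOn_of_deriv_pos (convex_Icc (0:ℝ) δ) hcont hderivpos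
  have h01 : (0:ℝ) ∈ Icc (0:ℝ) δ := ⟨le_rfl, le_of_lt hδ⟩
  have h02 : δ ∈ Icc (0:ℝ) δ := ⟨le_of_lt hδ, le_rfl⟩
  have hgt : g 0 < g δ := hmono h01 h02 hδ
  have hle : g δ ≤ g 0 := by
    have habs : |δ| < ε := by
      rw [abs_of_pos hδ]; exact half_lt_self hε
    exact (hballP' δ habs).2
  linarith

lemma D2_nonpos_of_localMax {f : ℝ × ℝ → ℝ} {U : Set (ℝ × ℝ)} {z : ℝ × ℝ}
    (hU : IsOpen U) (hzU : z ∈ U) (hf : ContDiffOn ℝ 2 f U) (hmax : IsLocalMax f z)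
    (p : ℝ × ℝ) : D2 f z p p ≤ 0 := by
  set L : ℝ → ℝ × ℝ := fun t => z + t • p with hL
  have hL0 : L 0 = z := by simp [hL]
  have hLd : ∀ t : ℝ, HasDerivAt L p t := by
    intro t
    have h1 : HasDerivAt (fun t : ℝ => t • p) ((1:ℝ) • p) t := (hasDerivAt_id t).smul_const p
    simpa only [one_smul] using h1.const_add z
  have hLc : ContDiff ℝ 2 L := by
    apply ContDiff.add contDiff_const
    exact ContDiff.smul contDiff_id contDiff_const
  have hLtend : Tendsto L (𝓝 0) (𝓝 z) := by
    have := hLc.continuous.tendsto 0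
    rwa [hL0] at this
  have hg2 : ContDiffAt ℝ 2 (f ∘ L) 0 := by
    have hfz : ContDiffAt ℝ 2 f (L 0) := by rw [hL0]; exact hf.contDiffAt (hU.mem_nhds hzU)
    exact hfz.comp 0 hLc.contDiffAt
  have hgmax : IsLocalMax (f ∘ L) 0 := by
    have h1 : ∀ᶠ t in 𝓝 (0:ℝ), f (L t) ≤ f z := hLtend.eventually hmax
    filter_upwards [h1] with t ht
    simpa [Function.comp, hL0] using ht
  have key := oneD_secondDeriv_test hg2 hgmax
  have hev : ∀ᶠ t in 𝓝 (0:ℝ), L t ∈ U := hLtend.eventually (hU.eventually_mem hzU)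
  have hder : deriv (f ∘ L) =ᶠ[𝓝 (0:ℝ)] fun t => fderiv ℝ f (L t) p := by
    filter_upwards [hev] with t ht
    have hdf : DifferentiableAt ℝ f (L t) :=
      (hf.contDiffAt (hU.mem_nhds ht)).differentiableAt two_ne_zero
    exact (hdf.hasFDerivAt.comp_hasDerivAt t (hLd t)).deriv
  have heq1 : deriv (deriv (f ∘ L)) 0 = deriv (fun t => fderiv ℝ f (L t) p) 0 :=
    Filter.EventuallyEq.deriv_eq hder
  have h2 : HasDerivAt (fun t => fderiv ℝ f (L t) p) (D2 f z p p) 0 := by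
    have hdd : DifferentiableAt ℝ (fun z' => fderiv ℝ f z' p) z :=
      diffAt_fderiv_apply (hf.contDiffAt (hU.mem_nhds hzU)) p
    have hfd : HasFDerivAt (fun z' => fderiv ℝ f z' p)
        (fderiv ℝ (fun z' => fderiv ℝ f z' p) z) (L 0) := by
      rw [hL0]; exact hdd.hasFDerivAt
    exact hfd.comp_hasDerivAt 0 (hLd 0)
  rw [heq1] at key
  rwa [h2.deriv] at key

/-! ### Growth comparison -/

/-- Exponential domination: a smaller exponent is dominated by a bigger one up to a constant. -/
lemma exp_dom {C ε m a : ℝ} (hC : 0 < C) (hε : 0 < ε) (h0 : 0 ≤ m) (hma : m < a) :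
    ∃ K : ℝ, 0 ≤ K ∧ ∀ x : ℝ, C * exp (m * x) ≤ ε * exp (a * x) + K := by
  set x₀ : ℝ := max 0 (Real.log (C / ε) / (a - m)) with hx₀
  refine ⟨C * exp (m * x₀), by positivity, fun x => ?_⟩
  rcases le_total x x₀ with h | h
  · have h1 : C * exp (m * x) ≤ C * exp (m * x₀) := by
      have : m * x ≤ m * x₀ := mul_le_mul_of_nonneg_left h h0
      exact mul_le_mul_of_nonneg_left (exp_le_exp.mpr this) hC.le
    nlinarith [exp_pos (a * x), hε]
  · have ham : 0 < a - m := by linarith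
    have h1 : Real.log (C / ε) ≤ (a - m) * x := by
      have h2 : Real.log (C / ε) / (a - m) ≤ x := le_trans (le_max_right _ _) h
      calc Real.log (C / ε) = Real.log (C / ε) / (a - m) * (a - m) := by field_simp
        _ ≤ x * (a - m) := mul_le_mul_of_nonneg_right h2 ham.le
        _ = (a - m) * x := by ring
    have h3 : C / ε ≤ exp ((a - m) * x) := by
      calc C / ε = exp (Real.log (C / ε)) := (Real.exp_log (by positivity)).symm
        _ ≤ exp ((a - m) * x) := exp_le_exp.mpr h1
    have h4 : C * exp (m * x) ≤ ε * exp (a * x) := by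
      have h5 : C ≤ ε * exp ((a - m) * x) := by
        rw [div_le_iff₀ hε] at h3; linarith [h3]
      calc C * exp (m * x) ≤ ε * exp ((a - m) * x) * exp (m * x) :=
            mul_le_mul_of_nonneg_right h5 (exp_pos _).le
        _ = ε * exp (a * x) := by rw [mul_assoc, ← Real.exp_add]; ring_nf
    nlinarith [exp_pos (m * x₀), hC]

/-- Extend a pointwise bound from `O` to its closure by continuity. -/
lemma abs_le_closure {O : Set (ℝ × ℝ)} {w G : ℝ × ℝ → ℝ} (hw : ContinuousOn w (closure O))
    (hG : Continuous G) (h : ∀ z ∈ O, |w z| ≤ G z) : ∀ z ∈ closure O, |w z| ≤ G z := by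
  intro z hz
  have hnb : (𝓝[O] z).NeBot := mem_closure_iff_nhdsWithin_neBot.mp hz
  have h1 : Tendsto (fun z' => |w z'|) (𝓝[O] z) (𝓝 |w z|) := by
    have := (hw z hz).mono (subset_closure (s := O))
    exact (continuous_abs.continuousAt.tendsto.comp this)
  have h2 : Tendsto G (𝓝[O] z) (𝓝 (G z)) := (hG.continuousAt.tendsto).mono_left
    nhdsWithin_le_nhds
  refine le_of_tendsto_of_tendsto h1 h2 ?_
  filter_upwards [self_mem_nhdsWithin] with z' hz'
  exact h z' hz'



/-- Numeric coordinate bounds from the growth comparison. -/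
lemma coord_bounds {ε C K₁ K₂ M₁ M₂ a b₁ b₂ c x y : ℝ}
    (hε : 0 < ε) (hC : 0 < C) (hK₁0 : 0 ≤ K₁) (hK₂0 : 0 ≤ K₂)
    (ha : 0 < a) (hb₁ : 0 < b₁) (hb₂ : 0 < b₂) (hc : 0 < c) (hy : 0 ≤ y)
    (h1 : ε * (exp (0 * x + a * y) + (exp (b₁ * x + 0 * y) + exp (-b₂ * x + c * y)))
        < C * (1 + exp (M₁ * y) + exp (M₂ * x)))
    (h2 : ∀ t : ℝ, C * exp (M₁ * t) ≤ ε / 2 * exp (a * t) + K₁)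
    (h3 : ∀ t : ℝ, C * exp (M₂ * t) ≤ ε / 2 * exp (b₁ * t) + K₂) :
    -(Real.log ((C + K₁ + K₂ + 1) / ε) / b₂) ≤ x
      ∧ x ≤ Real.log (2 * (C + K₁ + K₂ + 1) / ε) / b₁
      ∧ y ≤ Real.log (2 * (C + K₁ + K₂ + 1) / ε) / a := by
  have hD0 : 0 < C + K₁ + K₂ + 1 := by positivity
  have hD2ε : 0 < 2 * (C + K₁ + K₂ + 1) / ε := by positivity
  have hDε : 0 < (C + K₁ + K₂ + 1) / ε := by positivity
  have e1 : (0:ℝ) * x + a * y = a * y := by ring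
  have e2 : b₁ * x + (0:ℝ) * y = b₁ * x := by ring
  rw [e1, e2] at h1
  have hKy := h2 y
  have hKx := h3 x
  have hea : exp (a * y) ≤ 2 * (C + K₁ + K₂ + 1) / ε := by
    rw [le_div_iff₀ hε]
    nlinarith [mul_pos hε (exp_pos (b₁ * x)), mul_pos hε (exp_pos (-b₂ * x + c * y))]
  have heb : exp (b₁ * x) ≤ 2 * (C + K₁ + K₂ + 1) / ε := by
    rw [le_div_iff₀ hε]
    nlinarith [mul_pos hε (exp_pos (a * y)), mul_pos hε (exp_pos (-b₂ * x + c * y))]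
  have hec : exp (-b₂ * x + c * y) ≤ (C + K₁ + K₂ + 1) / ε := by
    rw [le_div_iff₀ hε]
    nlinarith [mul_pos hε (exp_pos (a * y)), mul_pos hε (exp_pos (b₁ * x))]
  have hya : a * y ≤ Real.log (2 * (C + K₁ + K₂ + 1) / ε) := (le_log_iff_exp_le hD2ε).mpr hea
  have hxb : b₁ * x ≤ Real.log (2 * (C + K₁ + K₂ + 1) / ε) := (le_log_iff_exp_le hD2ε).mpr heb
  have hxc : -b₂ * x ≤ Real.log ((C + K₁ + K₂ + 1) / ε) := by
    have h4 : -b₂ * x + c * y ≤ Real.log ((C + K₁ + K₂ + 1) / ε) :=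
      (le_log_iff_exp_le hDε).mpr hec
    nlinarith [mul_nonneg hc.le hy]
  refine ⟨?_, ?_, ?_⟩
  · rw [neg_le, le_div_iff₀ hb₂]
    nlinarith [hxc]
  · rw [le_div_iff₀ hb₁]
    nlinarith [hxb]
  · rw [le_div_iff₀ ha]
    nlinarith [hya]

set_option maxHeartbeats 2000000 in
lemma heston_max_principle (σ ρ κ θ q r : ℝ) (hσ : σ ≠ 0) (hρ₁ : -1 < ρ) (hρ₂ : ρ < 1)
    (hκ : 0 < κ) (hθ : 0 < θ) (hr : 0 < r) (hq : 0 ≤ q)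
    (O : Set (ℝ × ℝ)) (hO : IsOpen O) (hOsub : O ⊆ HH)
    (w : ℝ × ℝ → ℝ) (hwc : ContinuousOn w (closure O)) (hwd : ContDiffOn ℝ 2 w O)
    (hwg : ellGrowth σ κ θ r O w)
    (hweq : ∀ z ∈ O, hestonA σ ρ κ θ q r w z = 0)
    (hwb : ∀ z ∈ frontier O, w z = 0) :
    ∀ z ∈ closure O, w z ≤ 0 := by
  obtain ⟨C, M₁, M₂, hC, hM₁0, hM₁lt, hM₂0, hM₂1, hbound⟩ := hwg
  have hσ2 : 0 < σ ^ 2 := pow_pos (abs_pos.mpr hσ) 2 |>.trans_eq (by rw [sq_abs])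
  -- parameters of the comparison function
  set a : ℝ := min (r / (κ * θ)) (2 * κ / σ ^ 2) with ha_def
  have ha_pos : 0 < a := lt_min (by positivity) (by positivity)
  have haM : M₁ < a := hM₁lt
  set b₁ : ℝ := (M₂ + 1) / 2 with hb₁_def
  have hb₁M : M₂ < b₁ := by rw [hb₁_def]; linarith
  have hb₁1 : b₁ < 1 := by rw [hb₁_def]; linarith
  have hb₁0 : 0 < b₁ := by rw [hb₁_def]; linarith
  set c : ℝ := min (κ / σ ^ 2) (r / (2 * (κ * θ))) with hc_def
  have hc0 : 0 < c := lt_min (by positivity) (by positivity)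
  set b₂ : ℝ := min (κ * c / (2 * (1 + |σ| * c))) (min (r / (2 * (q + 1))) 1) with hb₂_def
  have hb₂0 : 0 < b₂ := by
    refine lt_min (by positivity) (lt_min (by positivity) one_pos)
  have hb₂1 : b₂ ≤ 1 := le_trans (min_le_right _ _) (min_le_right _ _)
  have ha1 : a ≤ r / (κ * θ) := min_le_left _ _
  have ha2 : a ≤ 2 * κ / σ ^ 2 := min_le_right _ _
  have hcκ : c ≤ κ / σ ^ 2 := min_le_left _ _
  have hcr : c ≤ r / (2 * (κ * θ)) := min_le_right _ _
  have hb₂κ : b₂ ≤ κ * c / (2 * (1 + |σ| * c)) := min_le_left _ _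
  have hb₂r : b₂ ≤ r / (2 * (q + 1)) := le_trans (min_le_right _ _) (min_le_left _ _)
  clear_value a c b₂ b₁
  clear ha_def hc_def hb₂_def
  -- the comparison function φ
  set φ : ℝ × ℝ → ℝ := fun z => eFun 0 a z + (eFun b₁ 0 z + eFun (-b₂) c z) with hφ_def
  have hφ2 : ContDiff ℝ 2 φ :=
    (contDiff_eFun 0 a).add ((contDiff_eFun b₁ 0).add (contDiff_eFun (-b₂) c))
  have hφcont : Continuous φ := hφ2.continuous
  have hφeval : ∀ z : ℝ × ℝ, φ z = exp (0 * z.1 + a * z.2) + (exp (b₁ * z.1 + 0 * z.2)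
      + exp (-b₂ * z.1 + c * z.2)) := fun z => rfl
  clear_value φ
  have hφpos : ∀ z, 0 < φ z := fun z => by
    rw [hφeval z]
    have := exp_pos (0 * z.1 + a * z.2)
    have := exp_pos (b₁ * z.1 + 0 * z.2)
    have := exp_pos (-b₂ * z.1 + c * z.2)
    linarith
  -- A φ ≥ 0 on O
  have hAφ : ∀ z ∈ O, 0 ≤ hestonA σ ρ κ θ q r φ z := by
    intro z hz
    have hy : 0 < z.2 := hOsub hz
    have habsσ : 0 < |σ| := abs_pos.mpr hσ
    have hAadd : hestonA σ ρ κ θ q r φ z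
        = hestonA σ ρ κ θ q r (eFun 0 a) z
          + (hestonA σ ρ κ θ q r (eFun b₁ 0) z + hestonA σ ρ κ θ q r (eFun (-b₂) c) z) := by
      rw [hφ_def]
      rw [hestonA_add σ ρ κ θ q r (contDiff_eFun 0 a)
        ((contDiff_eFun b₁ 0).add (contDiff_eFun (-b₂) c)),
        hestonA_add σ ρ κ θ q r (contDiff_eFun b₁ 0) (contDiff_eFun (-b₂) c)]
    rw [hAadd, hestonA_eFun, hestonA_eFun, hestonA_eFun]
    -- term 1 : exponent (0, a)
    have ht1 : 0 ≤ ((-(1/2) * (0^2 + 2*ρ*σ*(0*a) + σ^2*a^2) + 0/2 + κ*a) * z.2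
        + (-(r-q)*0 - κ*θ*a + r)) * eFun 0 a z := by
      have hy1 : 0 ≤ -(1/2) * (0^2 + 2*ρ*σ*(0*a) + σ^2*a^2) + 0/2 + κ*a := by
        have h2 : a ≤ 2 * κ / σ ^ 2 := ha2
        have h3 : a * σ ^ 2 ≤ 2 * κ := by
          rwa [le_div_iff₀ hσ2] at h2
        nlinarith [ha_pos]
      have hc1 : 0 ≤ -(r-q)*0 - κ*θ*a + r := by
        have h2 : a ≤ r / (κ * θ) := ha1
        have h3 : a * (κ * θ) ≤ r := by
          rwa [le_div_iff₀ (by positivity)] at h2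
        nlinarith
      exact mul_nonneg (by nlinarith [hy]) (eFun_pos 0 a z).le
    -- term 2 : exponent (b₁, 0)
    have ht2 : 0 ≤ ((-(1/2) * (b₁^2 + 2*ρ*σ*(b₁*0) + σ^2*0^2) + b₁/2 + κ*0) * z.2
        + (-(r-q)*b₁ - κ*θ*0 + r)) * eFun b₁ 0 z := by
      have hy1 : 0 ≤ -(1/2) * (b₁^2 + 2*ρ*σ*(b₁*0) + σ^2*0^2) + b₁/2 + κ*0 := by nlinarith
      have hc1 : 0 ≤ -(r-q)*b₁ - κ*θ*0 + r := by nlinarith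
      exact mul_nonneg (by nlinarith [hy]) (eFun_pos b₁ 0 z).le
    -- term 3 : exponent (-b₂, c)
    have ht3 : 0 ≤ ((-(1/2) * ((-b₂)^2 + 2*ρ*σ*((-b₂)*c) + σ^2*c^2) + (-b₂)/2 + κ*c) * z.2
        + (-(r-q)*(-b₂) - κ*θ*c + r)) * eFun (-b₂) c z := by
      have hρσ : -(|σ| * (b₂ * c)) ≤ ρ*σ*(b₂*c) := by
        have h1 : -|σ| ≤ ρ * σ := by
          have h2 : |ρ * σ| ≤ |σ| := by
            rw [abs_mul]
            have : |ρ| ≤ 1 := abs_le.mpr ⟨hρ₁.le, hρ₂.le⟩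
            nlinarith [abs_nonneg σ, abs_nonneg ρ]
          have h3 := neg_abs_le (ρ * σ)
          linarith
        have hbc : 0 ≤ b₂ * c := by positivity
        nlinarith [h1, hbc]
      have hy1 : 0 ≤ -(1/2) * ((-b₂)^2 + 2*ρ*σ*((-b₂)*c) + σ^2*c^2) + (-b₂)/2 + κ*c := by
        have h2 : c ≤ κ / σ ^ 2 := hcκ
        have h3 : c * σ ^ 2 ≤ κ := by
          rwa [le_div_iff₀ hσ2] at h2
        have h4 : b₂ ≤ κ * c / (2 * (1 + |σ| * c)) := hb₂κ
        have h5 : b₂ * (2 * (1 + |σ| * c)) ≤ κ * c := by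
          rwa [le_div_iff₀ (by positivity)] at h4
        nlinarith [h5, hρσ, mul_le_mul_of_nonneg_right h3 hc0.le,
          mul_le_mul_of_nonneg_left hb₂1 hb₂0.le, hb₂0, hc0, abs_nonneg σ]
      have hc1 : 0 ≤ -(r-q)*(-b₂) - κ*θ*c + r := by
        have h2 : c ≤ r / (2 * (κ * θ)) := hcr
        have h3 : c * (2 * (κ * θ)) ≤ r := by
          rwa [le_div_iff₀ (by positivity)] at h2
        have h4 : b₂ ≤ r / (2 * (q + 1)) := hb₂r
        have h5 : b₂ * (2 * (q + 1)) ≤ r := by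
          rwa [le_div_iff₀ (by positivity)] at h4
        nlinarith [hb₂0, hr, hq]
      exact mul_nonneg (by nlinarith [hy]) (eFun_pos (-b₂) c z).le
    linarith
  -- growth bound on the closure; nonnegative second coordinate on the closure
  set G : ℝ × ℝ → ℝ := fun z => C * (1 + exp (M₁ * z.2) + exp (M₂ * z.1)) with hG_def
  have hGcont : Continuous G := by
    rw [hG_def]; fun_prop
  have hboundG : ∀ z ∈ O, |w z| ≤ G z := by
    intro z hz; rw [hG_def]; exact hbound z hz
  clear_value G
  have hboundcl : ∀ z ∈ closure O, |w z| ≤ G z := abs_le_closure hwc hGcont hboundG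
  have hy0 : ∀ z ∈ closure O, 0 ≤ z.2 := by
    intro z hz
    have h1 : closure O ⊆ {z : ℝ × ℝ | 0 ≤ z.2} :=
      closure_minimal (fun z hz => show (0:ℝ) ≤ z.2 from le_of_lt (hOsub hz))
        (isClosed_le continuous_const continuous_snd)
    exact h1 hz
  -- main step: w ≤ ε φ on the closure, for every ε > 0
  have key : ∀ ε : ℝ, 0 < ε → ∀ z ∈ closure O, w z ≤ ε * φ z := by
    intro ε hε
    by_contra hcon
    push_neg at hcon
    obtain ⟨p, hpcl, hpv⟩ := hcon
    set v : ℝ × ℝ → ℝ := fun z => w z - ε * φ z with hv_def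
    have hvp : 0 < v p := by rw [hv_def]; dsimp only; linarith
    have hvcont : ContinuousOn v (closure O) := by
      rw [hv_def]
      exact hwc.sub ((continuous_const.mul hφcont).continuousOn)
    have hveval : ∀ z' : ℝ × ℝ, v z' = w z' - ε * φ z' := fun z' => rfl
    clear_value v
    set S : Set (ℝ × ℝ) := closure O ∩ v ⁻¹' (Ici (v p)) with hS_def
    have hScl : IsClosed S :=
      hvcont.preimage_isClosed_of_isClosed isClosed_closure isClosed_Ici
    -- S is bounded
    obtain ⟨K₁, hK₁0, hK₁⟩ := exp_dom hC (half_pos hε) hM₁0 haM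
    obtain ⟨K₂, hK₂0, hK₂⟩ := exp_dom hC (half_pos hε) hM₂0 hb₁M
    have hSsub : S ⊆ Icc ((-(Real.log ((C + K₁ + K₂ + 1) / ε) / b₂), (0:ℝ)) : ℝ × ℝ)
        ((Real.log (2 * (C + K₁ + K₂ + 1) / ε) / b₁,
          Real.log (2 * (C + K₁ + K₂ + 1) / ε) / a) : ℝ × ℝ) := by
      intro z hz
      obtain ⟨hzcl, hzv⟩ := hz
      have hy : 0 ≤ z.2 := hy0 z hzcl
      have h1 : ε * φ z < w z := by
        have hvv : v p ≤ v z := hzv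
        rw [hveval p, hveval z] at hvv
        linarith [hvp]
      have h2 : w z ≤ G z := le_trans (le_abs_self _) (hboundcl z hzcl)
      rw [hG_def] at h2
      have h1' : ε * (exp (0 * z.1 + a * z.2) + (exp (b₁ * z.1 + 0 * z.2)
          + exp (-b₂ * z.1 + c * z.2))) < C * (1 + exp (M₁ * z.2) + exp (M₂ * z.1)) := by
        rw [← hφeval z]
        exact lt_of_lt_of_le h1 h2
      have hbb := coord_bounds hε hC hK₁0 hK₂0 ha_pos hb₁0 hb₂0 hc0 hy h1' hK₁ hK₂
      exact ⟨⟨hbb.1, hy⟩, hbb.2.1, hbb.2.2⟩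
    have hScomp : IsCompact S := IsCompact.of_isClosed_subset isCompact_Icc hScl hSsub
    have hpS : p ∈ S := ⟨hpcl, Set.mem_preimage.mpr (Set.mem_Ici.mpr le_rfl)⟩
    obtain ⟨z₀, hz₀S, hz₀max⟩ :=
      hScomp.exists_isMaxOn ⟨p, hpS⟩ (hvcont.mono fun z hz => hz.1)
    have hz₀cl : z₀ ∈ closure O := hz₀S.1
    have hvz₀ : v p ≤ v z₀ := hz₀S.2
    by_cases hz₀O : z₀ ∈ O
    · -- interior maximum: contradiction via the operator
      have hlocmax : IsLocalMax v z₀ := by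
        filter_upwards [hO.eventually_mem hz₀O] with z hz
        by_cases hge : v p ≤ v z
        · exact hz₀max ⟨subset_closure hz, hge⟩
        · push_neg at hge; linarith [hvz₀]
      have hvC2 : ContDiffOn ℝ 2 v O := by
        rw [hv_def]
        exact hwd.sub ((contDiff_const.mul hφ2).contDiffOn)
      have hvCA : ContDiffAt ℝ 2 v z₀ := hvC2.contDiffAt (hO.mem_nhds hz₀O)
      have hfd0 : fderiv ℝ v z₀ = 0 := hlocmax.fderiv_eq_zero
      have hD1v : ∀ pd : ℝ × ℝ, D1 v z₀ pd = 0 := by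
        intro pd; rw [D1, hfd0]; simp
      -- second-derivative test along two directions
      have hD2ss : D2 v z₀ (1, ρ*σ) (1, ρ*σ) ≤ 0 :=
        D2_nonpos_of_localMax hO hz₀O hvC2 hlocmax _
      have hD2yy : D2 v z₀ (0, 1) (0, 1) ≤ 0 :=
        D2_nonpos_of_localMax hO hz₀O hvC2 hlocmax _
      -- the elliptic combination of second derivatives of v is ≤ 0
      set H := fderiv ℝ (fderiv ℝ v) z₀ with hH_def
      have hD2H : ∀ pd qd : ℝ × ℝ, D2 v z₀ pd qd = H qd pd := fun pd qd =>
        D2_eq_snd hvCA pd qd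
      have hsymH : H ((0:ℝ), (1:ℝ)) ((1:ℝ), (0:ℝ)) = H ((1:ℝ), (0:ℝ)) ((0:ℝ), (1:ℝ)) :=
        hvCA.isSymmSndFDerivAt (by simp [minSmoothness_of_isRCLikeNormedField]) (0, 1) (1, 0)
      have hexp : H ((1:ℝ), ρ*σ) ((1:ℝ), ρ*σ)
          = H (1, 0) (1, 0) + (ρ*σ) * H (1, 0) (0, 1)
            + ((ρ*σ) * H (0, 1) (1, 0) + (ρ*σ) * ((ρ*σ) * H (0, 1) (0, 1))) := by
        have e1 : ((1:ℝ), ρ*σ) = ((1:ℝ), (0:ℝ)) + (ρ*σ) • ((0:ℝ), (1:ℝ)) := by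
          simp [Prod.ext_iff]
        rw [e1]
        simp only [map_add, _root_.map_smul, ContinuousLinearMap.add_apply,
          ContinuousLinearMap.smul_apply, smul_eq_mul]
        ring
      have hterm : (1 - ρ^2) * σ^2 * H (0, 1) (0, 1) ≤ 0 := by
        have hρ2 : ρ^2 ≤ 1 := by nlinarith [hρ₁, hρ₂]
        have h1 : 0 ≤ (1 - ρ^2) * σ^2 := mul_nonneg (by linarith) (sq_nonneg σ)
        have h2 : H ((0:ℝ), (1:ℝ)) ((0:ℝ), (1:ℝ)) ≤ 0 := by
          rw [← hD2H]; exact hD2yy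
        exact mul_nonpos_of_nonneg_of_nonpos h1 h2
      have hQv : D2 v z₀ (1, 0) (1, 0) + 2*ρ*σ*D2 v z₀ (1, 0) (0, 1)
          + σ^2 * D2 v z₀ (0, 1) (0, 1) ≤ 0 := by
        rw [hD2H, hD2H, hD2H]
        have hs1 : H ((1:ℝ), ρ*σ) ((1:ℝ), ρ*σ) ≤ 0 := by
          rw [← hD2H]; exact hD2ss
        have hident : H ((1:ℝ), (0:ℝ)) ((1:ℝ), (0:ℝ))
            + 2*ρ*σ*H ((0:ℝ), (1:ℝ)) ((1:ℝ), (0:ℝ))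
            + σ^2*H ((0:ℝ), (1:ℝ)) ((0:ℝ), (1:ℝ))
            = H ((1:ℝ), ρ*σ) ((1:ℝ), ρ*σ)
              + (1 - ρ^2) * σ^2 * H ((0:ℝ), (1:ℝ)) ((0:ℝ), (1:ℝ)) := by
          rw [hexp, hsymH]; ring
        rw [hident]
        linarith [hs1, hterm]
      -- the equation at the maximum point
      have heq := hweq z₀ hz₀O
      have hd2a : D2 w z₀ (1, 0) (1, 0) = D2 v z₀ (1, 0) (1, 0) + ε * D2 φ z₀ (1, 0) (1, 0) := by
        have := D2_comb hO hz₀O hwd hφ2 ε (1, 0) (1, 0)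
        rw [← hv_def] at this; linarith
      have hd2b : D2 w z₀ (1, 0) (0, 1) = D2 v z₀ (1, 0) (0, 1) + ε * D2 φ z₀ (1, 0) (0, 1) := by
        have := D2_comb hO hz₀O hwd hφ2 ε (1, 0) (0, 1)
        rw [← hv_def] at this; linarith
      have hd2c : D2 w z₀ (0, 1) (0, 1) = D2 v z₀ (0, 1) (0, 1) + ε * D2 φ z₀ (0, 1) (0, 1) := by
        have := D2_comb hO hz₀O hwd hφ2 ε (0, 1) (0, 1)
        rw [← hv_def] at this; linarith
      have hwdiff : DifferentiableAt ℝ w z₀ :=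
        (hwd.contDiffAt (hO.mem_nhds hz₀O)).differentiableAt two_ne_zero
      have hφdiff : DifferentiableAt ℝ φ z₀ := (hφ2.differentiable two_ne_zero).differentiableAt
      have hd1a : D1 w z₀ (1, 0) = ε * D1 φ z₀ (1, 0) := by
        have h1 := D1_comb hwdiff hφdiff ε (1, 0)
        rw [← hv_def] at h1
        rw [hD1v (1, 0)] at h1; linarith
      have hd1b : D1 w z₀ (0, 1) = ε * D1 φ z₀ (0, 1) := by
        have h1 := D1_comb hwdiff hφdiff ε (0, 1)
        rw [← hv_def] at h1
        rw [hD1v (0, 1)] at h1; linarith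
      have hwz0 : w z₀ = v z₀ + ε * φ z₀ := by rw [hveval z₀]; ring
      have hkey : r * v z₀ = (z₀.2/2) * (D2 v z₀ (1, 0) (1, 0)
          + 2*ρ*σ*D2 v z₀ (1, 0) (0, 1) + σ^2 * D2 v z₀ (0, 1) (0, 1))
          - ε * hestonA σ ρ κ θ q r φ z₀ := by
        simp only [hestonA] at heq ⊢
        rw [hd2a, hd2b, hd2c, hd1a, hd1b, hwz0] at heq
        linear_combination heq
      have hy2 : 0 ≤ z₀.2 := hy0 z₀ hz₀cl
      have ht1 : (z₀.2/2) * (D2 v z₀ (1, 0) (1, 0)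
          + 2*ρ*σ*D2 v z₀ (1, 0) (0, 1) + σ^2 * D2 v z₀ (0, 1) (0, 1)) ≤ 0 :=
        mul_nonpos_of_nonneg_of_nonpos (by linarith) hQv
      have ht2 : 0 ≤ ε * hestonA σ ρ κ θ q r φ z₀ :=
        mul_nonneg hε.le (hAφ z₀ hz₀O)
      have hfin : r * v z₀ ≤ 0 := by rw [hkey]; linarith
      have hpos : 0 < r * v z₀ := mul_pos hr (lt_of_lt_of_le hvp hvz₀)
      linarith
    · -- boundary maximum: contradiction with w = 0 on the frontier
      have hz₀fr : z₀ ∈ frontier O := by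
        rw [hO.frontier_eq]; exact ⟨hz₀cl, hz₀O⟩
      have hw0 : w z₀ = 0 := hwb z₀ hz₀fr
      have : v z₀ = -(ε * φ z₀) := by rw [hveval z₀, hw0]; ring
      have hneg : v z₀ < 0 := by
        rw [this]; have := hφpos z₀; nlinarith
      linarith [hvp, hvz₀]
  -- conclude: w ≤ 0 on the closure
  intro z hz
  by_contra hpos
  push_neg at hpos
  have hφz := hφpos z
  have hε : 0 < w z / (2 * φ z) := by positivity
  have h1 := key (w z / (2 * φ z)) hε z hz
  have h2 : w z / (2 * φ z) * φ z = w z / 2 := by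
    field_simp
  rw [h2] at h1
  linarith

/-- Combine two growth bounds into one for the difference. -/
lemma ellGrowth_sub {σ κ θ r : ℝ} {S : Set (ℝ × ℝ)} {u₁ u₂ : ℝ × ℝ → ℝ}
    (hS : ∀ z ∈ S, 0 ≤ z.2)
    (h₁ : ellGrowth σ κ θ r S u₁) (h₂ : ellGrowth σ κ θ r S u₂) :
    ellGrowth σ κ θ r S (fun z => u₁ z - u₂ z) := by
  obtain ⟨C₁, M₁, N₁, hC₁, hM₁0, hM₁, hN₁0, hN₁, hb₁⟩ := h₁
  obtain ⟨C₂, M₂, N₂, hC₂, hM₂0, hM₂, hN₂0, hN₂, hb₂⟩ := h₂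
  refine ⟨3 * (C₁ + C₂), max M₁ M₂, max N₁ N₂, by positivity, le_max_of_le_left hM₁0,
    max_lt hM₁ hM₂, le_max_of_le_left hN₁0, max_lt hN₁ hN₂, ?_⟩
  intro z hz
  have hy := hS z hz
  have e1 : exp (M₁ * z.2) ≤ exp (max M₁ M₂ * z.2) := by
    apply exp_le_exp.mpr; exact mul_le_mul_of_nonneg_right (le_max_left _ _) hy
  have e2 : exp (M₂ * z.2) ≤ exp (max M₁ M₂ * z.2) := by
    apply exp_le_exp.mpr; exact mul_le_mul_of_nonneg_right (le_max_right _ _) hy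
  have e3 : exp (N₁ * z.1) ≤ 1 + exp (max N₁ N₂ * z.1) := by
    rcases le_total 0 z.1 with h | h
    · have : exp (N₁ * z.1) ≤ exp (max N₁ N₂ * z.1) := by
        apply exp_le_exp.mpr; exact mul_le_mul_of_nonneg_right (le_max_left _ _) h
      linarith [exp_pos (max N₁ N₂ * z.1)]
    · have : exp (N₁ * z.1) ≤ 1 := by
        rw [exp_le_one_iff]
        exact mul_nonpos_of_nonneg_of_nonpos hN₁0 h
      linarith [exp_pos (max N₁ N₂ * z.1)]
  have e4 : exp (N₂ * z.1) ≤ 1 + exp (max N₁ N₂ * z.1) := by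
    rcases le_total 0 z.1 with h | h
    · have : exp (N₂ * z.1) ≤ exp (max N₁ N₂ * z.1) := by
        apply exp_le_exp.mpr; exact mul_le_mul_of_nonneg_right (le_max_right _ _) h
      linarith [exp_pos (max N₁ N₂ * z.1)]
    · have : exp (N₂ * z.1) ≤ 1 := by
        rw [exp_le_one_iff]
        exact mul_nonpos_of_nonneg_of_nonpos hN₂0 h
      linarith [exp_pos (max N₁ N₂ * z.1)]
  have t1 := hb₁ z hz
  have t2 := hb₂ z hz
  have habs : |u₁ z - u₂ z| ≤ |u₁ z| + |u₂ z| := abs_sub _ _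
  have hE : 0 < exp (max M₁ M₂ * z.2) := exp_pos _
  have hE' : 0 < exp (max N₁ N₂ * z.1) := exp_pos _
  calc |u₁ z - u₂ z| ≤ |u₁ z| + |u₂ z| := habs
    _ ≤ C₁ * (1 + exp (M₁ * z.2) + exp (N₁ * z.1))
        + C₂ * (1 + exp (M₂ * z.2) + exp (N₂ * z.1)) := by linarith
    _ ≤ 3 * (C₁ + C₂) * (1 + exp (max M₁ M₂ * z.2) + exp (max N₁ N₂ * z.1)) := by
        nlinarith [e1, e2, e3, e4, hC₁.le, hC₂.le, hE, hE',
          mul_le_mul_of_nonneg_left e1 hC₁.le, mul_le_mul_of_nonneg_left e3 hC₁.le,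
          mul_le_mul_of_nonneg_left e2 hC₂.le, mul_le_mul_of_nonneg_left e4 hC₂.le]

end HestonAux

/-- Uniqueness of solutions to the elliptic Heston boundary value problem with full
Dirichlet boundary condition, when `0 < β < 1`. -/
theorem heston_elliptic_bvp_uniqueness_beta_lt_one
    (σ ρ κ θ q r : ℝ) (hσ : σ ≠ 0) (hρ₁ : -1 < ρ) (hρ₂ : ρ < 1)
    (hκ : 0 < κ) (hθ : 0 < θ) (hr : 0 < r) (hq : 0 ≤ q)
    (hβ₀ : 0 < 2 * κ * θ / σ ^ 2) (hβ₁ : 2 * κ * θ / σ ^ 2 < 1)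
    (O : Set (ℝ × ℝ)) (hO : IsOpen O) (hOconn : IsConnected O) (hOsub : O ⊆ HH)
    (hΓ₀ : (Gamma0 O).Nonempty)
    (f g u₁ u₂ : ℝ × ℝ → ℝ)
    (hf : ContinuousOn f O) (hfg : ellGrowth σ κ θ r O f)
    (hg : ContinuousOn g (frontier O)) (hgg : ellGrowth σ κ θ r (frontier O) g)
    (hu₁c : ContinuousOn u₁ (closure O)) (hu₁d : ContDiffOn ℝ 2 u₁ O)
    (hu₁g : ellGrowth σ κ θ r O u₁)
    (hu₁eq : ∀ z ∈ O, hestonA σ ρ κ θ q r u₁ z = f z)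
    (hu₁b : ∀ z ∈ frontier O, u₁ z = g z)
    (hu₂c : ContinuousOn u₂ (closure O)) (hu₂d : ContDiffOn ℝ 2 u₂ O)
    (hu₂g : ellGrowth σ κ θ r O u₂)
    (hu₂eq : ∀ z ∈ O, hestonA σ ρ κ θ q r u₂ z = f z)
    (hu₂b : ∀ z ∈ frontier O, u₂ z = g z) :
    EqOn u₁ u₂ (closure O) := by
  have hS : ∀ z ∈ O, 0 ≤ z.2 := fun z hz => le_of_lt (hOsub hz)
  have h12 : ∀ z ∈ closure O, u₁ z - u₂ z ≤ 0 :=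
    HestonAux.heston_max_principle σ ρ κ θ q r hσ hρ₁ hρ₂ hκ hθ hr hq O hO hOsub
      (fun z => u₁ z - u₂ z) (hu₁c.sub hu₂c) (hu₁d.sub hu₂d)
      (HestonAux.ellGrowth_sub hS hu₁g hu₂g)
      (fun z hz => by
        rw [HestonAux.hestonA_sub σ ρ κ θ q r hO hz hu₁d hu₂d, hu₁eq z hz, hu₂eq z hz,
          sub_self])
      (fun z hz => by show u₁ z - u₂ z = 0; rw [hu₁b z hz, hu₂b z hz, sub_self])
  have h21 : ∀ z ∈ closure O, u₂ z - u₁ z ≤ 0 :=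
    HestonAux.heston_max_principle σ ρ κ θ q r hσ hρ₁ hρ₂ hκ hθ hr hq O hO hOsub
      (fun z => u₂ z - u₁ z) (hu₂c.sub hu₁c) (hu₂d.sub hu₁d)
      (HestonAux.ellGrowth_sub hS hu₂g hu₁g)
      (fun z hz => by
        rw [HestonAux.hestonA_sub σ ρ κ θ q r hO hz hu₂d hu₁d, hu₁eq z hz, hu₂eq z hz,
          sub_self])
      (fun z hz => by show u₂ z - u₁ z = 0; rw [hu₁b z hz, hu₂b z hz, sub_self])
  intro z hz
  have t1 := h12 z hz
  have t2 := h21 z hz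
  show u₁ z = u₂ z
  linarith

end
end

section
/- Assume additionally r > 0, q ≥ 0 and 0 < β < 1. Let f : O → ℝ be continuous and obey the elliptic growth condition, let ψ be continuous on cl(O) and obey the elliptic growth condition, and let g : ∂O → ℝ be continuous, obey the elliptic growth condition, and satisfy ψ ≤ g on ∂O. If u₁ and u₂ are both continuous on cl(O), twice continuously differentiable on O, each uᵢ and A uᵢ obey the elliptic growth condition on O, and each uᵢ satisfies min{A uᵢ − f, uᵢ − ψ} = 0 on O and uᵢ = g on ∂O (i = 1, 2), then u₁ = u₂ on cl(O). -/
open Real Set MeasureTheory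

noncomputable section

/-- `min{Au − f, u − ψ} = 0` on `O`: `Au ≥ f` and `u ≥ ψ` on `O`, and at each point of `O`
at least one of `Au = f`, `u = ψ` holds. -/
def obstacleProblem (σ ρ κ θ q r : ℝ) (O : Set (ℝ × ℝ)) (f ψ u : ℝ × ℝ → ℝ) : Prop :=
  ∀ z ∈ O, f z ≤ hestonA σ ρ κ θ q r u z ∧ ψ z ≤ u z ∧
    (hestonA σ ρ κ θ q r u z = f z ∨ u z = ψ z)

lemma fderiv_comb (A B : ℝ × ℝ → ℝ) (c : ℝ) (z e : ℝ × ℝ)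
    (hA : DifferentiableAt ℝ A z) (hB : DifferentiableAt ℝ B z) :
    fderiv ℝ (fun x => A x + c * B x) z e = fderiv ℝ A z e + c * fderiv ℝ B z e := by
  have h : HasFDerivAt (fun x => A x + c * B x) (fderiv ℝ A z + c • fderiv ℝ B z) z := by
    exact hA.hasFDerivAt.add (hB.hasFDerivAt.const_smul c)
  rw [h.fderiv]; simp

lemma D1_comb (u h : ℝ × ℝ → ℝ) (c : ℝ) (z e : ℝ × ℝ)
    (hu : DifferentiableAt ℝ u z) (hh : DifferentiableAt ℝ h z) :
    D1 (fun x => u x + c * h x) z e = D1 u z e + c * D1 h z e :=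
  fderiv_comb u h c z e hu hh

lemma fderiv_apply_differentiableAt (u : ℝ × ℝ → ℝ) (z e : ℝ × ℝ)
    (hu : ContDiffAt ℝ 2 u z) :
    DifferentiableAt ℝ (fun x => fderiv ℝ u x e) z := by
  have h1 : ContDiffAt ℝ 1 (fderiv ℝ u) z := hu.fderiv_right (by norm_num)
  have h2 : DifferentiableAt ℝ (fderiv ℝ u) z := h1.differentiableAt (by norm_num)
  exact (ContinuousLinearMap.apply ℝ ℝ e).differentiableAt.comp z h2

lemma D2_comb (u h : ℝ × ℝ → ℝ) (c : ℝ) (z e e' : ℝ × ℝ)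
    (hu : ContDiffAt ℝ 2 u z) (hh : ContDiffAt ℝ 2 h z) :
    D2 (fun x => u x + c * h x) z e e' = D2 u z e e' + c * D2 h z e e' := by
  unfold D2
  have hev : (fun x => fderiv ℝ (fun y => u y + c * h y) x e)
      =ᶠ[nhds z] (fun x => fderiv ℝ u x e + c * fderiv ℝ h x e) := by
    filter_upwards [hu.eventually (by norm_num), hh.eventually (by norm_num)] with x hux hhx
    exact fderiv_comb u h c x e (hux.differentiableAt (by norm_num))
      (hhx.differentiableAt (by norm_num))
  rw [hev.fderiv_eq]
  exact fderiv_comb _ _ c z e' (fderiv_apply_differentiableAt u z e hu)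
    (fderiv_apply_differentiableAt h z e hh)

lemma hestonA_comb (σ ρ κ θ q r : ℝ) (u h : ℝ × ℝ → ℝ) (c : ℝ) (z : ℝ × ℝ)
    (hu : ContDiffAt ℝ 2 u z) (hh : ContDiffAt ℝ 2 h z) :
    hestonA σ ρ κ θ q r (fun x => u x + c * h x) z
      = hestonA σ ρ κ θ q r u z + c * hestonA σ ρ κ θ q r h z := by
  have h1 := hu.differentiableAt (by norm_num)
  have h2 := hh.differentiableAt (by norm_num)
  unfold hestonA
  rw [D2_comb u h c z _ _ hu hh, D2_comb u h c z _ _ hu hh, D2_comb u h c z _ _ hu hh,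
    D1_comb u h c z _ h1 h2, D1_comb u h c z _ h1 h2]
  ring

lemma D2_eq_snd (u : ℝ × ℝ → ℝ) (z : ℝ × ℝ) (hu : ContDiffAt ℝ 2 u z) (a b : ℝ × ℝ) :
    D2 u z a b = fderiv ℝ (fderiv ℝ u) z b a := by
  unfold D2
  have h1 : ContDiffAt ℝ 1 (fderiv ℝ u) z := hu.fderiv_right (by norm_num)
  have hd : DifferentiableAt ℝ (fderiv ℝ u) z := h1.differentiableAt (by norm_num)
  have : (fun x => fderiv ℝ u x a) = (ContinuousLinearMap.apply ℝ ℝ a) ∘ (fderiv ℝ u) := rfl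
  rw [this, fderiv_comp z (ContinuousLinearMap.apply ℝ ℝ a).differentiableAt hd]
  simp

lemma D2_symm (u : ℝ × ℝ → ℝ) (z : ℝ × ℝ) (hu : ContDiffAt ℝ 2 u z) (a b : ℝ × ℝ) :
    D2 u z a b = D2 u z b a := by
  have h1 : ContDiffAt ℝ 1 (fderiv ℝ u) z := hu.fderiv_right (by norm_num)
  have hd : DifferentiableAt ℝ (fderiv ℝ u) z := h1.differentiableAt (by norm_num)
  have hev : ∀ᶠ x in nhds z, HasFDerivAt u (fderiv ℝ u x) x := by
    filter_upwards [hu.eventually (by norm_num)] with x hx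
    exact (hx.differentiableAt (by norm_num)).hasFDerivAt
  have hsymm := second_derivative_symmetric_of_eventually hev hd.hasFDerivAt a b
  rw [D2_eq_snd u z hu a b, D2_eq_snd u z hu b a]
  rw [← hsymm]

lemma oneDim_second_deriv_nonpos (g g₁ : ℝ → ℝ) (c : ℝ)
    (hg : ∀ᶠ t in nhds (0:ℝ), HasDerivAt g (g₁ t) t)
    (hg₁ : HasDerivAt g₁ c 0) (hmax : IsLocalMax g 0) : c ≤ 0 := by
  by_contra hc
  push_neg at hc
  have hg₁0 : g₁ 0 = 0 := by
    have hd : deriv g 0 = g₁ 0 := hg.self_of_nhds.deriv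
    rw [← hd]; exact hmax.deriv_eq_zero
  -- eventually g₁ t > 0 for t > 0 small
  have hslope : Filter.Tendsto (slope g₁ 0) (nhdsWithin 0 {(0:ℝ)}ᶜ) (nhds c) :=
    hasDerivAt_iff_tendsto_slope.1 hg₁
  have hpos : ∀ᶠ t in nhdsWithin 0 {(0:ℝ)}ᶜ, 0 < slope g₁ 0 t :=
    hslope.eventually (eventually_gt_nhds hc)
  obtain ⟨ε, hε, hball⟩ := Metric.eventually_nhds_iff.1 hg
  obtain ⟨ε', hε', hball'⟩ := Metric.mem_nhdsWithin_iff.1 hpos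
  obtain ⟨ε'', hε'', hball''⟩ := Metric.eventually_nhds_iff.1 (hmax : ∀ᶠ t in nhds 0, g t ≤ g 0)
  set δ := min ε (min ε' ε'') with hδ
  have hδpos : 0 < δ := lt_min hε (lt_min hε' hε'')
  -- on (0, δ), deriv g = g₁ > 0
  have hgd : ∀ t ∈ Ioo (0:ℝ) δ, 0 < g₁ t := by
    intro t ht
    have htne : t ∈ ({(0:ℝ)}ᶜ : Set ℝ) := by simp [ne_of_gt ht.1]
    have hdist : dist t 0 < ε' := by
      rw [Real.dist_eq, sub_zero, abs_of_pos ht.1]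
      exact lt_of_lt_of_le ht.2 (le_trans (min_le_right _ _) (min_le_left _ _))
    have hthis := hball' ⟨Metric.mem_ball.2 hdist, htne⟩
    simp only [mem_setOf_eq] at hthis
    have hsl : slope g₁ 0 t = g₁ t / t := by
      simp [slope_def_field, hg₁0]
    rw [hsl] at hthis
    have this := hthis
    have := mul_pos this ht.1
    rwa [div_mul_cancel₀] at this
    exact ne_of_gt ht.1
  have hmono : StrictMonoOn g (Icc 0 (δ/2)) := by
    apply strictMonoOn_of_deriv_pos (convex_Icc _ _)
    · intro t ht
      have hδε : δ ≤ ε := min_le_left _ _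
      have : dist t 0 < ε := by
        rw [Real.dist_eq, sub_zero, abs_of_nonneg ht.1]
        linarith [ht.2]
      exact (hball this).continuousAt.continuousWithinAt
    · intro t ht
      rw [interior_Icc] at ht
      have hδ2 : δ/2 ≤ δ := by linarith
      have hdist : dist t 0 < ε := by
        rw [Real.dist_eq, sub_zero, abs_of_pos ht.1]
        exact lt_of_lt_of_le ht.2 (le_trans hδ2 (min_le_left _ _))
      rw [(hball hdist).deriv]
      exact hgd t ⟨ht.1, lt_of_lt_of_le ht.2 hδ2⟩
  have h1 : g 0 < g (δ/2) := hmono (by constructor <;> linarith) (by constructor <;> linarith) (by linarith)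
  have h2 : g (δ/2) ≤ g 0 := by
    apply hball''
    rw [Real.dist_eq, sub_zero, abs_of_pos (by linarith)]
    calc δ/2 < δ := by linarith
    _ ≤ ε'' := le_trans (min_le_right _ _) (min_le_right _ _)
  linarith

lemma D2_self_nonpos (v : ℝ × ℝ → ℝ) (z e : ℝ × ℝ)
    (hv : ContDiffAt ℝ 2 v z) (hmax : IsLocalMax v z) : D2 v z e e ≤ 0 := by
  have hlineT : Filter.Tendsto (fun t : ℝ => z + t • e) (nhds 0) (nhds z) := by
    have hc : Continuous (fun t : ℝ => z + t • e) := by continuity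
    have := hc.tendsto 0
    simpa using this
  have hline : ∀ t : ℝ, HasDerivAt (fun s : ℝ => z + s • e) e t := by
    intro t
    have h1 : HasDerivAt (fun s : ℝ => s • e) ((1:ℝ) • e) t := (hasDerivAt_id t).smul_const e
    simpa using h1.const_add z
  have h1 : ContDiffAt ℝ 1 (fderiv ℝ v) z := hv.fderiv_right (by norm_num)
  have hd : DifferentiableAt ℝ (fderiv ℝ v) z := h1.differentiableAt (by norm_num)
  have hΦ : HasFDerivAt (fun x => fderiv ℝ v x e)
      ((ContinuousLinearMap.apply ℝ ℝ e).comp (fderiv ℝ (fderiv ℝ v) z)) z :=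
    (ContinuousLinearMap.apply ℝ ℝ e).hasFDerivAt.comp z hd.hasFDerivAt
  have hg : ∀ᶠ t in nhds (0:ℝ), HasDerivAt (fun s : ℝ => v (z + s • e))
      (fderiv ℝ v (z + t • e) e) t := by
    filter_upwards [hlineT.eventually (hv.eventually (by norm_num))] with t ht
    exact (ht.differentiableAt (by norm_num)).hasFDerivAt.comp_hasDerivAt t (hline t)
  have hg₁ : HasDerivAt (fun t : ℝ => fderiv ℝ v (z + t • e) e)
      (fderiv ℝ (fderiv ℝ v) z e e) 0 := by
    have hΦ' : HasFDerivAt (fun x => fderiv ℝ v x e)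
        ((ContinuousLinearMap.apply ℝ ℝ e).comp (fderiv ℝ (fderiv ℝ v) z)) (z + (0:ℝ) • e) := by
      simpa using hΦ
    have := hΦ'.comp_hasDerivAt 0 (hline 0)
    simpa [Function.comp_def] using this
  have hmaxg : IsLocalMax (fun s : ℝ => v (z + s • e)) 0 := by
    have := hlineT.eventually hmax
    simpa [IsLocalMax, IsMaxFilter] using this
  have := oneDim_second_deriv_nonpos _ _ _ hg hg₁ hmaxg
  rwa [D2_eq_snd v z hv e e]

lemma maxpoint (σ ρ κ θ q r : ℝ) (v : ℝ × ℝ → ℝ) (z : ℝ × ℝ) (hz : 0 ≤ z.2)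
    (hρσ : (ρ*σ)^2 ≤ σ^2)
    (hv : ContDiffAt ℝ 2 v z) (hmax : IsLocalMax v z) :
    r * v z ≤ hestonA σ ρ κ θ q r v z := by
  have hD1 : ∀ e : ℝ × ℝ, D1 v z e = 0 := by
    intro e; simp [D1, hmax.fderiv_eq_zero]
  have hQ22 := D2_self_nonpos v z ((0:ℝ),(1:ℝ)) hv hmax
  have hQe := D2_self_nonpos v z ((1:ℝ), ρ*σ) hv hmax
  have hsym := D2_symm v z hv ((1:ℝ),(0:ℝ)) ((0:ℝ),(1:ℝ))
  have hexp : D2 v z ((1:ℝ), ρ*σ) ((1:ℝ), ρ*σ)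
      = D2 v z ((1:ℝ),(0:ℝ)) ((1:ℝ),(0:ℝ)) + (ρ*σ) * D2 v z ((1:ℝ),(0:ℝ)) ((0:ℝ),(1:ℝ))
        + (ρ*σ) * D2 v z ((0:ℝ),(1:ℝ)) ((1:ℝ),(0:ℝ))
        + (ρ*σ)^2 * D2 v z ((0:ℝ),(1:ℝ)) ((0:ℝ),(1:ℝ)) := by
    rw [D2_eq_snd v z hv, D2_eq_snd v z hv, D2_eq_snd v z hv, D2_eq_snd v z hv,
      D2_eq_snd v z hv]
    have he : ((1:ℝ), ρ*σ) = ((1:ℝ),(0:ℝ)) + (ρ*σ) • ((0:ℝ),(1:ℝ)) := by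
      simp [Prod.ext_iff]
    rw [he]
    simp only [map_add, _root_.map_smul, ContinuousLinearMap.add_apply,
      ContinuousLinearMap.smul_apply, smul_eq_mul]
    ring
  have hQ : D2 v z ((1:ℝ),(0:ℝ)) ((1:ℝ),(0:ℝ))
      + 2*ρ*σ*D2 v z ((1:ℝ),(0:ℝ)) ((0:ℝ),(1:ℝ))
      + σ^2*D2 v z ((0:ℝ),(1:ℝ)) ((0:ℝ),(1:ℝ)) ≤ 0 := by
    have h5 : D2 v z ((1:ℝ),(0:ℝ)) ((1:ℝ),(0:ℝ))
        + 2*ρ*σ*D2 v z ((1:ℝ),(0:ℝ)) ((0:ℝ),(1:ℝ))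
        + σ^2*D2 v z ((0:ℝ),(1:ℝ)) ((0:ℝ),(1:ℝ))
        = D2 v z ((1:ℝ), ρ*σ) ((1:ℝ), ρ*σ)
          + (σ^2 - (ρ*σ)^2) * D2 v z ((0:ℝ),(1:ℝ)) ((0:ℝ),(1:ℝ)) := by
      linear_combination (-1 : ℝ) * hexp + (ρ*σ) * hsym
    rw [h5]
    have h6 : (σ^2 - (ρ*σ)^2) * D2 v z ((0:ℝ),(1:ℝ)) ((0:ℝ),(1:ℝ)) ≤ 0 :=
      mul_nonpos_of_nonneg_of_nonpos (sub_nonneg.2 hρσ) hQ22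
    linarith
  show r * v z ≤ -(z.2 / 2) * (D2 v z (1, 0) (1, 0) + 2 * ρ * σ * D2 v z (1, 0) (0, 1)
      + σ ^ 2 * D2 v z (0, 1) (0, 1))
    - (r - q - z.2 / 2) * D1 v z (1, 0) - κ * (θ - z.2) * D1 v z (0, 1) + r * v z
  rw [hD1, hD1]
  have : 0 ≤ -(z.2 / 2) * (D2 v z (1, 0) (1, 0) + 2 * ρ * σ * D2 v z (1, 0) (0, 1)
      + σ ^ 2 * D2 v z (0, 1) (0, 1)) := by
    have h2 : (0:ℝ) ≤ z.2/2 := by linarith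
    have := mul_nonneg h2 (neg_nonneg.2 hQ)
    nlinarith [this]
  linarith

def expL (c₁ c₂ : ℝ) (z : ℝ × ℝ) : ℝ := Real.exp (c₁ * z.1 + c₂ * z.2)

lemma expL_pos (c₁ c₂ : ℝ) (z : ℝ × ℝ) : 0 < expL c₁ c₂ z := Real.exp_pos _

lemma expL_contDiff (c₁ c₂ : ℝ) : ContDiff ℝ 2 (expL c₁ c₂) := by
  apply ContDiff.exp
  fun_prop

lemma expL_hasFDerivAt (c₁ c₂ : ℝ) (z : ℝ × ℝ) :
    HasFDerivAt (expL c₁ c₂)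
      (expL c₁ c₂ z • (c₁ • ContinuousLinearMap.fst ℝ ℝ ℝ
        + c₂ • ContinuousLinearMap.snd ℝ ℝ ℝ)) z := by
  have hL : HasFDerivAt (fun z : ℝ × ℝ => c₁ * z.1 + c₂ * z.2)
      (c₁ • ContinuousLinearMap.fst ℝ ℝ ℝ + c₂ • ContinuousLinearMap.snd ℝ ℝ ℝ) z :=
    (hasFDerivAt_fst.const_mul c₁).add (hasFDerivAt_snd.const_mul c₂)
  exact (Real.hasDerivAt_exp (c₁ * z.1 + c₂ * z.2)).comp_hasFDerivAt z hL

lemma D1_expL (c₁ c₂ : ℝ) (z e : ℝ × ℝ) :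
    D1 (expL c₁ c₂) z e = expL c₁ c₂ z * (c₁ * e.1 + c₂ * e.2) := by
  unfold D1
  rw [(expL_hasFDerivAt c₁ c₂ z).fderiv]
  simp [smul_eq_mul]
  ring

lemma D2_expL (c₁ c₂ : ℝ) (z e e' : ℝ × ℝ) :
    D2 (expL c₁ c₂) z e e'
      = expL c₁ c₂ z * (c₁ * e.1 + c₂ * e.2) * (c₁ * e'.1 + c₂ * e'.2) := by
  unfold D2
  have hfun : (fun x => fderiv ℝ (expL c₁ c₂) x e)
      = fun x => (c₁ * e.1 + c₂ * e.2) * expL c₁ c₂ x := by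
    funext x
    rw [show fderiv ℝ (expL c₁ c₂) x e = D1 (expL c₁ c₂) x e from rfl, D1_expL]
    ring
  rw [hfun, fderiv_const_mul (((expL_contDiff c₁ c₂).differentiable (by norm_num)) z)]
  rw [ContinuousLinearMap.smul_apply, smul_eq_mul,
    show fderiv ℝ (expL c₁ c₂) z e' = D1 (expL c₁ c₂) z e' from rfl, D1_expL]
  ring

lemma hestonA_expL (σ ρ κ θ q r c₁ c₂ : ℝ) (z : ℝ × ℝ) :
    hestonA σ ρ κ θ q r (expL c₁ c₂) z
      = expL c₁ c₂ z * (-(z.2/2) * (c₁^2 + 2*ρ*σ*c₁*c₂ + σ^2*c₂^2)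
          - (r - q - z.2/2)*c₁ - κ*(θ - z.2)*c₂ + r) := by
  unfold hestonA
  rw [D2_expL, D2_expL, D2_expL, D1_expL, D1_expL]
  simp only []
  ring


open Filter in
lemma tendsto_exp_const_mul_atTop {c : ℝ} (hc : 0 < c) :
    Tendsto (fun y : ℝ => Real.exp (c * y)) atTop atTop :=
  Real.tendsto_exp_atTop.comp ((tendsto_const_mul_atTop_of_pos hc).2 tendsto_id)

open Filter in
lemma tendsto_const_sub_exp {C δ c : ℝ} (hδ : 0 < δ) (hc : 0 < c) :
    Tendsto (fun y : ℝ => C - δ * Real.exp (c * y)) atTop atBot := by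
  have h1 : Tendsto (fun y : ℝ => δ * Real.exp (c * y)) atTop atTop :=
    (tendsto_const_mul_atTop_of_pos hδ).2 (tendsto_exp_const_mul_atTop hc)
  have h2 : Tendsto (fun y : ℝ => -(δ * Real.exp (c * y))) atTop atBot :=
    tendsto_neg_atTop_atBot.comp h1
  have h3 := tendsto_atBot_add_const_left atTop C h2
  simpa [sub_eq_add_neg] using h3

open Filter in
lemma tendsto_const_sub_exp_neg {C δ c : ℝ} (hδ : 0 < δ) (hc : 0 < c) :
    Tendsto (fun y : ℝ => C - δ * Real.exp (-(c * y))) atBot atBot := by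
  have h0 : Tendsto (fun y : ℝ => -(c * y)) atBot atTop := by
    have : Tendsto (fun y : ℝ => c * (-y)) atBot atTop :=
      (tendsto_const_mul_atTop_of_pos hc).2 tendsto_neg_atBot_atTop
    simpa [mul_comm, neg_mul, mul_neg] using this
  have h1 : Tendsto (fun y : ℝ => δ * Real.exp (-(c * y))) atBot atTop :=
    (tendsto_const_mul_atTop_of_pos hδ).2 (Real.tendsto_exp_atTop.comp h0)
  have h2 : Tendsto (fun y : ℝ => -(δ * Real.exp (-(c * y)))) atBot atBot :=
    tendsto_neg_atTop_atBot.comp h1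
  have h3 := tendsto_atBot_add_const_left atBot C h2
  simpa [sub_eq_add_neg] using h3

open Filter in
lemma sup_on_Ici_of_tendsto (g : ℝ → ℝ) (hg : Continuous g)
    (hT : Tendsto g atTop atBot) : ∃ S, ∀ y, 0 ≤ y → g y ≤ S := by
  obtain ⟨Y, hY⟩ := Filter.eventually_atTop.1 (hT.eventually (Filter.eventually_le_atBot 0))
  obtain ⟨S, hS⟩ := (isCompact_Icc (a := (0:ℝ)) (b := max Y 0)).bddAbove_image hg.continuousOn
  refine ⟨max S 0, fun y hy => ?_⟩
  by_cases hyY : y ≤ max Y 0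
  · exact le_trans (hS (mem_image_of_mem g ⟨hy, hyY⟩)) (le_max_left _ _)
  · push_neg at hyY
    exact le_trans (hY y (le_trans (le_max_left Y 0) hyY.le)) (le_max_right _ _)

open Filter in
lemma sup_all_of_tendsto (g : ℝ → ℝ) (hg : Continuous g)
    (hT : Tendsto g atTop atBot) (hB : Tendsto g atBot atBot) : ∃ S, ∀ y, g y ≤ S := by
  obtain ⟨Y, hY⟩ := Filter.eventually_atTop.1 (hT.eventually (Filter.eventually_le_atBot 0))
  obtain ⟨X, hX⟩ := Filter.eventually_atBot.1 (hB.eventually (Filter.eventually_le_atBot 0))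
  obtain ⟨S, hS⟩ := (isCompact_Icc (a := min X 0) (b := max Y 0)).bddAbove_image hg.continuousOn
  refine ⟨max S 0, fun y => ?_⟩
  by_cases h1 : y ≤ max Y 0
  · by_cases h2 : min X 0 ≤ y
    · exact le_trans (hS (mem_image_of_mem g ⟨h2, h1⟩)) (le_max_left _ _)
    · push_neg at h2
      exact le_trans (hX y (le_trans h2.le (min_le_left X 0))) (le_max_right _ _)
  · push_neg at h1
    exact le_trans (hY y (le_trans (le_max_left Y 0) h1.le)) (le_max_right _ _)

lemma barrier_nonneg (σ ρ κ θ q r m a b : ℝ) (hq : 0 ≤ q) (hr : 0 < r) (hm0 : 0 < m)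
    (hc₀ : 0 < m * (κ - σ ^ 2 * m / 2)) (hrm : 0 < r - κ * θ * m)
    (ha0' : 0 < a) (ha1' : a < 1) (hbpos : 0 < b) (hbsq : b ^ 2 ≤ b)
    (hb2 : b * (1 + |ρ| * |σ| * m) ≤ m * (κ - σ ^ 2 * m / 2))
    (hb3 : b * (2 * (q + 1)) ≤ r - κ * θ * m)
    (z : ℝ × ℝ) (hz : 0 ≤ z.2) :
    0 ≤ hestonA σ ρ κ θ q r
      (fun x => expL 0 m x + 1 * (expL a 0 x + 1 * expL (-b) m x)) z := by
  have hρσlow : -(|ρ| * |σ|) ≤ ρ * σ := by rw [← abs_mul]; exact neg_abs_le _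
  have e1 : hestonA σ ρ κ θ q r
      (fun x => expL 0 m x + 1 * (expL a 0 x + 1 * expL (-b) m x)) z
      = hestonA σ ρ κ θ q r (expL 0 m) z
        + 1 * hestonA σ ρ κ θ q r (fun x => expL a 0 x + 1 * expL (-b) m x) z :=
    hestonA_comb σ ρ κ θ q r (expL 0 m) (fun x => expL a 0 x + 1 * expL (-b) m x) 1 z
      (expL_contDiff 0 m).contDiffAt
      (((expL_contDiff a 0).add (contDiff_const.mul (expL_contDiff (-b) m))).contDiffAt)
  have e2 : hestonA σ ρ κ θ q r (fun x => expL a 0 x + 1 * expL (-b) m x) z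
      = hestonA σ ρ κ θ q r (expL a 0) z + 1 * hestonA σ ρ κ θ q r (expL (-b) m) z :=
    hestonA_comb σ ρ κ θ q r (expL a 0) (expL (-b) m) 1 z
      (expL_contDiff a 0).contDiffAt (expL_contDiff (-b) m).contDiffAt
  rw [e1, e2, hestonA_expL, hestonA_expL, hestonA_expL]
  have A := expL_pos 0 m z
  have B := expL_pos a 0 z
  have Cc := expL_pos (-b) m z
  have hP1 : 0 ≤ -(z.2/2) * ((0:ℝ)^2 + 2*ρ*σ*0*m + σ^2*m^2)
      - (r - q - z.2/2)*0 - κ*(θ - z.2)*m + r := by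
    nlinarith [mul_nonneg hz hc₀.le]
  have hP2 : 0 ≤ -(z.2/2) * (a^2 + 2*ρ*σ*a*0 + σ^2*(0:ℝ)^2)
      - (r - q - z.2/2)*a - κ*(θ - z.2)*0 + r := by
    have hya : 0 ≤ z.2 * (a * (1 - a)) :=
      mul_nonneg hz (mul_nonneg ha0'.le (by linarith))
    nlinarith [mul_nonneg hq ha0'.le]
  have hP3 : 0 ≤ -(z.2/2) * ((-b)^2 + 2*ρ*σ*(-b)*m + σ^2*m^2)
      - (r - q - z.2/2)*(-b) - κ*(θ - z.2)*m + r := by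
    have hbm : (0:ℝ) ≤ b * m := mul_nonneg hbpos.le hm0.le
    have h₁ : -(|ρ| * |σ|) * (b * m) ≤ ρ * σ * (b * m) :=
      mul_le_mul_of_nonneg_right hρσlow hbm
    have hcoeff : 0 ≤ κ*m - σ^2*m^2/2 + ρ*σ*b*m - b^2/2 - b/2 := by linarith [hb2, h₁, hbsq]
    have hconst : 0 ≤ (r - q)*b + (r - κ*θ*m) := by linarith [hb3, mul_pos hr hbpos, mul_nonneg hq hbpos.le]
    linarith [mul_nonneg hz hcoeff, hconst]
  linarith [mul_nonneg A.le hP1, mul_nonneg B.le hP2, mul_nonneg Cc.le hP3]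


open Filter in
lemma comparison (σ ρ κ θ q r : ℝ) (hσ : σ ≠ 0) (hρ : |ρ| < 1)
    (hκ : 0 < κ) (hθ : 0 < θ) (hr : 0 < r) (hq : 0 ≤ q)
    (O : Set (ℝ × ℝ)) (hO : IsOpen O) (hOsub : O ⊆ HH)
    (w : ℝ × ℝ → ℝ) (hwc : ContinuousOn w (closure O)) (hwd : ContDiffOn ℝ 2 w O)
    (C M a' : ℝ) (hC : 0 < C) (hM : 0 ≤ M) (hM' : M < min (r / (κ * θ)) (2 * κ / σ ^ 2))
    (ha0 : 0 ≤ a') (ha1 : a' < 1)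
    (hbd : ∀ z ∈ O, |w z| ≤ C * (1 + Real.exp (M * z.2) + Real.exp (a' * z.1)))
    (hfr : ∀ z ∈ frontier O, w z ≤ 0)
    (hsub : ∀ z ∈ O, 0 < w z → hestonA σ ρ κ θ q r w z ≤ 0) :
    ∀ z ∈ closure O, w z ≤ 0 := by
  have hσ2 : 0 < σ ^ 2 := by positivity
  have hρσ2 : (ρ*σ)^2 ≤ σ^2 := by
    have hρ1 : ρ^2 ≤ 1 := by nlinarith [sq_abs ρ, abs_nonneg ρ]
    nlinarith [hσ2.le]
  have hmin : 0 < min (r / (κ * θ)) (2 * κ / σ ^ 2) :=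
    lt_min (by positivity) (by positivity)
  obtain ⟨m, hmM, hm0, hm1, hm2⟩ :
      ∃ m, M < m ∧ 0 < m ∧ m < r / (κ * θ) ∧ m < 2 * κ / σ ^ 2 := by
    refine ⟨(M + min (r / (κ * θ)) (2 * κ / σ ^ 2)) / 2, by linarith, by linarith, ?_, ?_⟩
    · have := min_le_left (r / (κ * θ)) (2 * κ / σ ^ 2); linarith
    · have := min_le_right (r / (κ * θ)) (2 * κ / σ ^ 2); linarith
  have hrm : 0 < r - κ * θ * m := by
    have := (lt_div_iff₀ (by positivity : (0:ℝ) < κ * θ)).1 hm1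
    linarith
  have hc₀ : 0 < m * (κ - σ ^ 2 * m / 2) := by
    have := (lt_div_iff₀ hσ2).1 hm2
    have h2 : 0 < κ - σ ^ 2 * m / 2 := by nlinarith
    exact mul_pos hm0 h2
  obtain ⟨a, haa', ha1', ha0'⟩ : ∃ a, a' < a ∧ a < 1 ∧ 0 < a :=
    ⟨(a' + 1) / 2, by linarith, by linarith, by linarith⟩
  have hden : (0:ℝ) < 1 + |ρ| * |σ| * m := by positivity
  obtain ⟨b, hbpos, hb1, hb2, hb3⟩ :
      ∃ b, 0 < b ∧ b ≤ 1 ∧ b * (1 + |ρ| * |σ| * m) ≤ m * (κ - σ ^ 2 * m / 2) ∧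
        b * (2 * (q + 1)) ≤ r - κ * θ * m := by
    refine ⟨min 1 (min ((m * (κ - σ ^ 2 * m / 2)) / (1 + |ρ| * |σ| * m))
      ((r - κ * θ * m) / (2 * (q + 1)))), ?_, min_le_left _ _, ?_, ?_⟩
    · exact lt_min one_pos (lt_min (by positivity) (by positivity))
    · exact (le_div_iff₀ hden).1 (le_trans (min_le_right _ _) (min_le_left _ _))
    · exact (le_div_iff₀ (by positivity)).1 (le_trans (min_le_right _ _) (min_le_right _ _))
  -- the barrier
  set h := fun x : ℝ × ℝ => expL 0 m x + 1 * (expL a 0 x + 1 * expL (-b) m x) with hh_def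
  have hhcd : ContDiff ℝ 2 h :=
    (expL_contDiff 0 m).add
      (contDiff_const.mul ((expL_contDiff a 0).add (contDiff_const.mul (expL_contDiff (-b) m))))
  have hhpos : ∀ z, 0 < h z := by
    intro z
    have A := expL_pos 0 m z
    have B := expL_pos a 0 z
    have Cc := expL_pos (-b) m z
    rw [hh_def]; dsimp only; linarith
  have hbsq : b ^ 2 ≤ b := by
    linarith [mul_nonneg hbpos.le (sub_nonneg.2 hb1)]
  have hAh : ∀ z : ℝ × ℝ, 0 ≤ z.2 → 0 ≤ hestonA σ ρ κ θ q r h z := fun z hz =>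
    barrier_nonneg σ ρ κ θ q r m a b hq hr hm0 hc₀ hrm ha0' ha1' hbpos hbsq hb2 hb3 z hz
  -- nonnegative second coordinate on the closure
  have hycl : ∀ z ∈ closure O, (0:ℝ) ≤ z.2 := by
    intro z hz
    have hsubset : closure O ⊆ {z : ℝ × ℝ | 0 ≤ z.2} :=
      closure_minimal (fun x hx => (show (0:ℝ) ≤ x.2 from (hOsub hx).le))
        (isClosed_le continuous_const continuous_snd)
    exact hsubset hz
  -- growth bound on the closure
  have hbdcl : ∀ z ∈ closure O, |w z| ≤ C * (1 + Real.exp (M*z.2) + Real.exp (a'*z.1)) := by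
    intro z hz
    have hne : (nhdsWithin z O).NeBot := mem_closure_iff_nhdsWithin_neBot.1 hz
    have h1 : Tendsto w (nhdsWithin z O) (nhds (w z)) :=
      (hwc z hz).mono_left (nhdsWithin_mono z subset_closure)
    have h2 : Tendsto (fun x : ℝ × ℝ => C * (1 + Real.exp (M*x.2) + Real.exp (a'*x.1)))
        (nhdsWithin z O) (nhds (C * (1 + Real.exp (M*z.2) + Real.exp (a'*z.1)))) := by
      apply Continuous.tendsto ?_ z |>.mono_left nhdsWithin_le_nhds
      fun_prop
    exact le_of_tendsto_of_tendsto h1.abs h2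
      (eventually_nhdsWithin_of_forall (fun x hx => hbd x hx))
  -- main δ-estimate
  have key : ∀ δ : ℝ, 0 < δ → ∀ z ∈ closure O, w z ≤ δ * h z := by
    intro δ hδ
    by_contra hcontra
    push_neg at hcontra
    obtain ⟨z₀, hz₀cl, hz₀⟩ := hcontra
    set v := fun x : ℝ × ℝ => w x + (-δ) * h x with hv_def
    have hvc : ContinuousOn v (closure O) :=
      hwc.add (Continuous.continuousOn (continuous_const.mul hhcd.continuous))
    set c := v z₀ with hc_def
    have hcpos : 0 < c := by rw [hc_def, hv_def]; dsimp only; linarith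
    set g₁ := fun y : ℝ => C + C * Real.exp (M*y) - δ * Real.exp (m*y) with hg₁def
    set g₂ := fun x : ℝ => C * Real.exp (a'*x) - δ * Real.exp (a*x) - δ * Real.exp ((-b)*x)
      with hg₂def
    have hvle : ∀ z ∈ closure O, v z ≤ g₁ z.2 + g₂ z.1 := by
      intro z hz
      have h0 := hycl z hz
      have hbz := hbdcl z hz
      have habs : w z ≤ C * (1 + Real.exp (M*z.2) + Real.exp (a'*z.1)) :=
        le_trans (le_abs_self _) hbz
      have hsplit : Real.exp ((-b)*z.1) ≤ Real.exp ((-b)*z.1 + m*z.2) := by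
        rw [Real.exp_add]
        have h1e := Real.one_le_exp (mul_nonneg hm0.le h0)
        have h2e := mul_le_mul_of_nonneg_left h1e (Real.exp_pos ((-b)*z.1)).le
        simpa using h2e
      have hsplit2 : δ * Real.exp ((-b)*z.1) ≤ δ * Real.exp ((-b)*z.1 + m*z.2) :=
        mul_le_mul_of_nonneg_left hsplit hδ.le
      rw [hv_def, hg₁def, hg₂def, hh_def]
      dsimp only
      simp only [expL, zero_mul, zero_add, add_zero, mul_zero, one_mul]
      linarith
    have hg₁cont : Continuous g₁ := by rw [hg₁def]; fun_prop
    have hg₂cont : Continuous g₂ := by rw [hg₂def]; fun_prop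
    have T1 : Tendsto g₁ atTop atBot := by
      apply tendsto_atBot_mono' atTop ?_ (tendsto_const_sub_exp (C := C + C) hδ
        (by linarith : (0:ℝ) < m - M))
      filter_upwards [eventually_ge_atTop (0:ℝ),
        (tendsto_exp_const_mul_atTop (by linarith : (0:ℝ) < m - M)).eventually_ge_atTop (C/δ)]
        with y hy0 hyF
      have hE : (1:ℝ) ≤ Real.exp (M*y) := Real.one_le_exp (mul_nonneg hM hy0)
      have hFc : C ≤ δ * Real.exp ((m-M)*y) := by
        rw [div_le_iff₀ hδ] at hyF
        linarith
      have hsplit : Real.exp (m*y) = Real.exp (M*y) * Real.exp ((m-M)*y) := by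
        rw [← Real.exp_add]; ring_nf
      rw [hg₁def]; dsimp only
      rw [hsplit]
      linarith [mul_nonneg (sub_nonneg.2 hE) (sub_nonneg.2 hFc)]
    have T2 : Tendsto g₂ atTop atBot := by
      apply tendsto_atBot_mono' atTop ?_ (tendsto_const_sub_exp (C := C) hδ
        (by linarith : (0:ℝ) < a - a'))
      filter_upwards [eventually_ge_atTop (0:ℝ),
        (tendsto_exp_const_mul_atTop (by linarith : (0:ℝ) < a - a')).eventually_ge_atTop (C/δ)]
        with x hx0 hxF
      have hE : (1:ℝ) ≤ Real.exp (a'*x) := Real.one_le_exp (mul_nonneg ha0 hx0)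
      have hFc : C ≤ δ * Real.exp ((a-a')*x) := by
        rw [div_le_iff₀ hδ] at hxF
        linarith
      have hsplit : Real.exp (a*x) = Real.exp (a'*x) * Real.exp ((a-a')*x) := by
        rw [← Real.exp_add]; ring_nf
      rw [hg₂def]; dsimp only
      rw [hsplit]
      linarith [mul_nonneg (sub_nonneg.2 hE) (sub_nonneg.2 hFc),
        mul_pos hδ (Real.exp_pos ((-b)*x))]
    have T3 : Tendsto g₂ atBot atBot := by
      apply tendsto_atBot_mono' atBot ?_ (tendsto_const_sub_exp_neg (C := C) hδ hbpos)
      filter_upwards [eventually_le_atBot (0:ℝ)] with x hx0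
      have hE : Real.exp (a'*x) ≤ 1 := Real.exp_le_one_iff.2 (mul_nonpos_of_nonneg_of_nonpos ha0 hx0)
      have hneg : (-b)*x = -(b*x) := by ring
      rw [hg₂def]; dsimp only
      rw [hneg]
      linarith [mul_le_mul_of_nonneg_left hE hC.le, mul_pos hδ (Real.exp_pos (a*x))]
    obtain ⟨S₁, hS₁⟩ := sup_on_Ici_of_tendsto g₁ hg₁cont T1
    obtain ⟨S₂, hS₂⟩ := sup_all_of_tendsto g₂ hg₂cont T2 T3
    obtain ⟨Y, hY⟩ := eventually_atTop.1 (T1.eventually (eventually_le_atBot (c - S₂ - 1)))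
    obtain ⟨Xp, hXp⟩ := eventually_atTop.1 (T2.eventually (eventually_le_atBot (c - S₁ - 1)))
    obtain ⟨Xm, hXm⟩ := eventually_atBot.1 (T3.eventually (eventually_le_atBot (c - S₁ - 1)))
    set K := closure O ∩ v ⁻¹' (Ici c) with hK
    have hKclosed : IsClosed K :=
      hvc.preimage_isClosed_of_isClosed isClosed_closure isClosed_Ici
    have hKsub : K ⊆ (Icc (min Xm 0) (max Xp 0)) ×ˢ (Icc (0:ℝ) (max Y 0)) := by
      rintro z ⟨hzcl, hzv⟩
      have hzv' : c ≤ v z := hzv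
      have h0 := hycl z hzcl
      have hle := hvle z hzcl
      have hg₁S : g₁ z.2 ≤ S₁ := hS₁ z.2 h0
      have hg₂S : g₂ z.1 ≤ S₂ := hS₂ z.1
      constructor
      · constructor
        · by_contra hx
          push_neg at hx
          have : g₂ z.1 ≤ c - S₁ - 1 := hXm z.1 (le_trans hx.le (min_le_left _ _))
          linarith
        · by_contra hx
          push_neg at hx
          have : g₂ z.1 ≤ c - S₁ - 1 := hXp z.1 (le_trans (le_max_left _ _) hx.le)
          linarith
      · constructor
        · exact h0
        · by_contra hy
          push_neg at hy
          have : g₁ z.2 ≤ c - S₂ - 1 := hY z.2 (le_trans (le_max_left _ _) hy.le)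
          linarith
    have hKcpt : IsCompact K :=
      IsCompact.of_isClosed_subset (isCompact_Icc.prod isCompact_Icc) hKclosed hKsub
    have hKne : K.Nonempty := ⟨z₀, hz₀cl, le_refl c⟩
    obtain ⟨zs, hzsK, hzsmax⟩ := hKcpt.exists_isMaxOn hKne (hvc.mono inter_subset_left)
    have hzscl : zs ∈ closure O := hzsK.1
    have hvzs : c ≤ v zs := hzsK.2
    have hglobal : ∀ z ∈ closure O, v z ≤ v zs := by
      intro z hz
      by_cases hcz : c ≤ v z
      · exact (isMaxOn_iff.1 hzsmax) z ⟨hz, hcz⟩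
      · push_neg at hcz
        exact le_trans hcz.le (le_trans (le_refl c)
          ((isMaxOn_iff.1 hzsmax) z₀ ⟨hz₀cl, le_refl c⟩))
    have hzsO : zs ∈ O := by
      by_contra hns
      have hfrz : zs ∈ frontier O := by
        rw [hO.frontier_eq]; exact ⟨hzscl, hns⟩
      have hw0 := hfr zs hfrz
      have hhp := hhpos zs
      have : v zs < 0 := by
        rw [hv_def]; dsimp only
        have := mul_pos hδ hhp
        linarith
      linarith
    have hlm : IsLocalMax v zs := by
      filter_upwards [hO.mem_nhds hzsO] with x hx
      exact hglobal x (subset_closure hx)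
    have hvcd : ContDiffAt ℝ 2 v zs :=
      (hwd.contDiffAt (hO.mem_nhds hzsO)).add (contDiffAt_const.mul hhcd.contDiffAt)
    have hmp := maxpoint σ ρ κ θ q r v zs (hycl zs hzscl) hρσ2 hvcd hlm
    have hwzs : 0 < w zs := by
      have hhp := hhpos zs
      have hle : c ≤ w zs + (-δ) * h zs := hvzs
      have := mul_pos hδ hhp
      linarith
    have hAww := hsub zs hzsO hwzs
    have hAvv : hestonA σ ρ κ θ q r v zs
        = hestonA σ ρ κ θ q r w zs + (-δ) * hestonA σ ρ κ θ q r h zs :=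
      hestonA_comb σ ρ κ θ q r w h (-δ) zs
        (hwd.contDiffAt (hO.mem_nhds hzsO)) hhcd.contDiffAt
    have hAh' := hAh zs (hycl zs hzscl)
    have hAvle : hestonA σ ρ κ θ q r v zs ≤ 0 := by
      rw [hAvv]
      have := mul_nonneg hδ.le hAh'
      linarith
    have hrv : 0 < r * v zs := mul_pos hr (lt_of_lt_of_le hcpos hvzs)
    linarith
  -- conclusion
  intro z hz
  by_contra hwz
  push_neg at hwz
  have hpos := hhpos z
  have hkey := key (w z / (2 * h z)) (div_pos hwz (by linarith)) z hz
  have heq : (w z / (2 * h z)) * h z = w z / 2 := by field_simp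
  rw [heq] at hkey
  linarith

lemma oneSided (σ ρ κ θ q r : ℝ) (hσ : σ ≠ 0) (hρ : |ρ| < 1)
    (hκ : 0 < κ) (hθ : 0 < θ) (hr : 0 < r) (hq : 0 ≤ q)
    (O : Set (ℝ × ℝ)) (hO : IsOpen O) (hOsub : O ⊆ HH)
    (f ψ u₁ u₂ : ℝ × ℝ → ℝ)
    (hu₁c : ContinuousOn u₁ (closure O)) (hu₁d : ContDiffOn ℝ 2 u₁ O)
    (hu₁g : ellGrowth σ κ θ r O u₁)
    (hu₂c : ContinuousOn u₂ (closure O)) (hu₂d : ContDiffOn ℝ 2 u₂ O)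
    (hu₂g : ellGrowth σ κ θ r O u₂)
    (hu₁eq : obstacleProblem σ ρ κ θ q r O f ψ u₁)
    (hu₂eq : obstacleProblem σ ρ κ θ q r O f ψ u₂)
    (hbnd : ∀ z ∈ frontier O, u₁ z = u₂ z) :
    ∀ z ∈ closure O, u₁ z - u₂ z ≤ 0 := by
  obtain ⟨C₁, M₁, N₁, hC₁, hM₁0, hM₁lt, hN₁0, hN₁lt, hB₁⟩ := hu₁g
  obtain ⟨C₂, M₂, N₂, hC₂, hM₂0, hM₂lt, hN₂0, hN₂lt, hB₂⟩ := hu₂g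
  set w := fun x : ℝ × ℝ => u₁ x + (-1 : ℝ) * u₂ x with hw_def
  have hwc : ContinuousOn w (closure O) := hu₁c.add (continuousOn_const.mul hu₂c)
  have hwd : ContDiffOn ℝ 2 w O := hu₁d.add (contDiffOn_const.mul hu₂d)
  have hxterm : ∀ N : ℝ, 0 ≤ N → N ≤ max N₁ N₂ → ∀ x : ℝ,
      Real.exp (N * x) ≤ 1 + Real.exp (max N₁ N₂ * x) := by
    intro N hN0 hNle x
    rcases le_or_gt 0 x with hx | hx
    · have h1 : Real.exp (N * x) ≤ Real.exp (max N₁ N₂ * x) :=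
        Real.exp_le_exp.2 (mul_le_mul_of_nonneg_right hNle hx)
      linarith
    · have h1 : Real.exp (N * x) ≤ 1 :=
        Real.exp_le_one_iff.2 (mul_nonpos_of_nonneg_of_nonpos hN0 hx.le)
      linarith [Real.exp_pos (max N₁ N₂ * x)]
  have hbd : ∀ z ∈ O, |w z| ≤ (2 * (C₁ + C₂)) *
      (1 + Real.exp (max M₁ M₂ * z.2) + Real.exp (max N₁ N₂ * z.1)) := by
    intro z hz
    have hy0 : (0:ℝ) ≤ z.2 := (hOsub hz).le
    have habs : |w z| ≤ |u₁ z| + |u₂ z| := by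
      rw [hw_def]; dsimp only
      calc |u₁ z + (-1) * u₂ z| = |u₁ z - u₂ z| := by ring_nf
      _ ≤ |u₁ z| + |u₂ z| := abs_sub _ _
    have hy1 : Real.exp (M₁ * z.2) ≤ Real.exp (max M₁ M₂ * z.2) :=
      Real.exp_le_exp.2 (mul_le_mul_of_nonneg_right (le_max_left _ _) hy0)
    have hy2 : Real.exp (M₂ * z.2) ≤ Real.exp (max M₁ M₂ * z.2) :=
      Real.exp_le_exp.2 (mul_le_mul_of_nonneg_right (le_max_right _ _) hy0)
    have hx1 := hxterm N₁ hN₁0 (le_max_left _ _) z.1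
    have hx2 := hxterm N₂ hN₂0 (le_max_right _ _) z.1
    have hb1 := hB₁ z hz
    have hb2 := hB₂ z hz
    have hE := Real.exp_pos (max M₁ M₂ * z.2)
    have hX := Real.exp_pos (max N₁ N₂ * z.1)
    nlinarith [mul_le_mul_of_nonneg_left hy1 hC₁.le, mul_le_mul_of_nonneg_left hx1 hC₁.le,
      mul_le_mul_of_nonneg_left hy2 hC₂.le, mul_le_mul_of_nonneg_left hx2 hC₂.le,
      mul_pos hC₁ hE, mul_pos hC₂ hE, mul_pos hC₁ hX, mul_pos hC₂ hX]
  have hfr : ∀ z ∈ frontier O, w z ≤ 0 := by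
    intro z hz
    rw [hw_def]; dsimp only
    rw [hbnd z hz]; ring_nf; exact le_refl 0
  have hsub : ∀ z ∈ O, 0 < w z → hestonA σ ρ κ θ q r w z ≤ 0 := by
    intro z hz hwz
    obtain ⟨hf1, hψ1, hc1⟩ := hu₁eq z hz
    obtain ⟨hf2, hψ2, hc2⟩ := hu₂eq z hz
    have hugt : u₂ z < u₁ z := by
      rw [hw_def] at hwz; dsimp only at hwz; linarith
    have hA1 : hestonA σ ρ κ θ q r u₁ z = f z := by
      rcases hc1 with hc | hc
      · exact hc
      · exfalso; rw [hc] at hugt; linarith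
    have hAeq : hestonA σ ρ κ θ q r w z
        = hestonA σ ρ κ θ q r u₁ z + (-1 : ℝ) * hestonA σ ρ κ θ q r u₂ z :=
      hestonA_comb σ ρ κ θ q r u₁ u₂ (-1) z
        (hu₁d.contDiffAt (hO.mem_nhds hz)) (hu₂d.contDiffAt (hO.mem_nhds hz))
    rw [hAeq, hA1]; linarith
  have hM'lt : max M₁ M₂ < min (r / (κ * θ)) (2 * κ / σ ^ 2) := max_lt hM₁lt hM₂lt
  have := comparison σ ρ κ θ q r hσ hρ hκ hθ hr hq O hO hOsub w hwc hwd
    (2 * (C₁ + C₂)) (max M₁ M₂) (max N₁ N₂) (by linarith) (le_max_of_le_left hM₁0)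
    hM'lt (le_max_of_le_left hN₁0) (max_lt hN₁lt hN₂lt) hbd hfr hsub
  intro z hz
  have hwz := this z hz
  rw [hw_def] at hwz; dsimp only at hwz; linarith

/-- Uniqueness of solutions to the elliptic Heston obstacle problem with full Dirichlet
boundary condition, when `0 < β < 1`. -/
theorem heston_elliptic_obstacle_uniqueness_beta_lt_one
    (σ ρ κ θ q r : ℝ) (hσ : σ ≠ 0) (hρ₁ : -1 < ρ) (hρ₂ : ρ < 1)
    (hκ : 0 < κ) (hθ : 0 < θ) (hr : 0 < r) (hq : 0 ≤ q)
    (hβ₀ : 0 < 2 * κ * θ / σ ^ 2) (hβ₁ : 2 * κ * θ / σ ^ 2 < 1)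
    (O : Set (ℝ × ℝ)) (hO : IsOpen O) (hOconn : IsConnected O) (hOsub : O ⊆ HH)
    (hΓ₀ : (Gamma0 O).Nonempty)
    (f ψ g u₁ u₂ : ℝ × ℝ → ℝ)
    (hf : ContinuousOn f O) (hfg : ellGrowth σ κ θ r O f)
    (hψ : ContinuousOn ψ (closure O)) (hψg : ellGrowth σ κ θ r (closure O) ψ)
    (hg : ContinuousOn g (frontier O)) (hgg : ellGrowth σ κ θ r (frontier O) g)
    (hψg' : ∀ z ∈ frontier O, ψ z ≤ g z)
    (hu₁c : ContinuousOn u₁ (closure O)) (hu₁d : ContDiffOn ℝ 2 u₁ O)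
    (hu₁g : ellGrowth σ κ θ r O u₁)
    (hAu₁g : ellGrowth σ κ θ r O (hestonA σ ρ κ θ q r u₁))
    (hu₁eq : obstacleProblem σ ρ κ θ q r O f ψ u₁)
    (hu₁b : ∀ z ∈ frontier O, u₁ z = g z)
    (hu₂c : ContinuousOn u₂ (closure O)) (hu₂d : ContDiffOn ℝ 2 u₂ O)
    (hu₂g : ellGrowth σ κ θ r O u₂)
    (hAu₂g : ellGrowth σ κ θ r O (hestonA σ ρ κ θ q r u₂))
    (hu₂eq : obstacleProblem σ ρ κ θ q r O f ψ u₂)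
    (hu₂b : ∀ z ∈ frontier O, u₂ z = g z) :
    EqOn u₁ u₂ (closure O) := by
  have hρ : |ρ| < 1 := abs_lt.2 ⟨hρ₁, hρ₂⟩
  have h12 := oneSided σ ρ κ θ q r hσ hρ hκ hθ hr hq O hO hOsub f ψ u₁ u₂
    hu₁c hu₁d hu₁g hu₂c hu₂d hu₂g hu₁eq hu₂eq
    (fun z hz => by rw [hu₁b z hz, hu₂b z hz])
  have h21 := oneSided σ ρ κ θ q r hσ hρ hκ hθ hr hq O hO hOsub f ψ u₂ u₁
    hu₂c hu₂d hu₂g hu₁c hu₁d hu₁g hu₂eq hu₁eq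
    (fun z hz => by rw [hu₁b z hz, hu₂b z hz])
  intro z hz
  have ha := h12 z hz
  have hb := h21 z hz
  have : u₁ z = u₂ z := by linarith
  exact this

end
end

section
/- Let κ > 0, θ > 0 and σ ≠ 0 be real constants, set β := 2κθ/σ² and μ := 2κ/σ², and assume β ≥ 1. Fix x > 0. Then the function y ↦ (∫_yˣ z^{−β} exp(μ z) dz) · y^{β−1} exp(−μ y) is Lebesgue integrable on the interval (0, x); equivalently, ∫₀ˣ (∫_yˣ z^{−β} e^{μ z} dz) y^{β−1} e^{−μ y} dy < ∞. -/
open Real Set MeasureTheory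

/-- When `β = 2κθ/σ² ≥ 1`, the quantity
`N(0) = ∫₀ˣ (∫_yˣ z^{−β} e^{μ z} dz) y^{β−1} e^{−μ y} dy` is finite, i.e. the function
`y ↦ (∫_yˣ z^{−β} e^{μ z} dz) · y^{β−1} e^{−μ y}` is Lebesgue integrable on `(0,x)`;
here `μ = 2κ/σ²`. This is the entrance-boundary criterion at `y = 0` for the Feller
square-root process. -/
theorem feller_entrance_boundary_N0_finite
    (κ θ σ : ℝ) (hκ : 0 < κ) (hθ : 0 < θ) (hσ : σ ≠ 0)
    (hβ : 1 ≤ 2 * κ * θ / σ ^ 2) (x : ℝ) (hx : 0 < x) :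
    IntegrableOn
      (fun y : ℝ =>
        (∫ z in Ioo y x, z ^ (-(2 * κ * θ / σ ^ 2)) * exp ((2 * κ / σ ^ 2) * z)) *
          (y ^ (2 * κ * θ / σ ^ 2 - 1) * exp (-(2 * κ / σ ^ 2) * y)))
      (Ioo 0 x) := by
  have hσ2 : 0 < σ ^ 2 := by positivity
  set β := 2 * κ * θ / σ ^ 2 with hβdef
  set μ := 2 * κ / σ ^ 2 with hμdef
  have hμpos : 0 < μ := by rw [hμdef]; positivity
  set g : ℝ → ℝ := fun z => z ^ (-β) * exp (μ * z) with hg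
  have hgmeas : Measurable g := by fun_prop
  -- measurability of the whole function
  have hmeas : AEStronglyMeasurable
      (fun y : ℝ => (∫ z in Ioo y x, g z) * (y ^ (β - 1) * exp (-μ * y)))
      (volume.restrict (Ioo 0 x)) := by
    apply AEStronglyMeasurable.mul
    · have hS : MeasurableSet {q : ℝ × ℝ | q.1 < q.2 ∧ q.2 < x} :=
        (measurableSet_lt measurable_fst measurable_snd).inter
          (measurableSet_lt measurable_snd measurable_const)
      have hsm : StronglyMeasurable
          fun p : ℝ × ℝ => ({q : ℝ × ℝ | q.1 < q.2 ∧ q.2 < x}.indicator (fun q => g q.2)) p :=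
        StronglyMeasurable.indicator (hgmeas.comp measurable_snd).stronglyMeasurable hS
      have H := hsm.integral_prod_right' (ν := volume)
      have heq : (fun y : ℝ => ∫ z in Ioo y x, g z)
          = fun y => ∫ z, ({q : ℝ × ℝ | q.1 < q.2 ∧ q.2 < x}.indicator (fun q => g q.2)) (y, z) := by
        funext y
        rw [← integral_indicator measurableSet_Ioo]
        congr 1
      rw [heq]
      exact H.aestronglyMeasurable.restrict
    · exact (by fun_prop : Measurable fun y : ℝ => y ^ (β - 1) * exp (-μ * y)).aestronglyMeasurable
  set C : ℝ := exp (μ * x) * (2 * x ^ ((1:ℝ)/2)) with hC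
  -- integrability of z ^ (-1/2) on Ioo 0 x
  have hhalf : IntegrableOn (fun z : ℝ => z ^ (-(1/2) : ℝ)) (Ioo 0 x) := by
    have h1 : IntervalIntegrable (fun z : ℝ => z ^ (-(1/2):ℝ)) volume 0 x :=
      intervalIntegral.intervalIntegrable_rpow' (by norm_num)
    rw [intervalIntegrable_iff_integrableOn_Ioo_of_le hx.le] at h1
    exact h1
  have hint : IntegrableOn (fun y : ℝ => C * y ^ (-(1/2) : ℝ)) (Ioo 0 x) :=
    hhalf.const_mul C
  refine hint.mono' hmeas ?_
  filter_upwards [ae_restrict_mem measurableSet_Ioo] with y hy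
  obtain ⟨hy0, hyx⟩ := hy
  -- inner integral bound
  have hgcont : IntegrableOn g (Ioo y x) := by
    apply (ContinuousOn.integrableOn_Icc ?_).mono_set Ioo_subset_Icc_self
    apply ContinuousOn.mul
    · apply ContinuousOn.rpow_const continuousOn_id
      intro z hz
      exact Or.inl (ne_of_gt (lt_of_lt_of_le hy0 hz.1))
    · exact (continuous_exp.comp (continuous_const.mul continuous_id)).continuousOn
  have hb1 : ∀ z ∈ Ioo y x, g z ≤ (exp (μ * x) * y ^ ((1:ℝ)/2 - β)) * z ^ (-(1/2):ℝ) := by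
    intro z hz
    have hz0 : 0 < z := lt_trans hy0 hz.1
    have hsplit : z ^ (-β) = z ^ ((1:ℝ)/2 - β) * z ^ (-(1/2):ℝ) := by
      rw [← Real.rpow_add hz0]; ring_nf
    have h1 : z ^ ((1:ℝ)/2 - β) ≤ y ^ ((1:ℝ)/2 - β) :=
      Real.rpow_le_rpow_of_nonpos hy0 hz.1.le (by linarith)
    have h2 : exp (μ * z) ≤ exp (μ * x) :=
      exp_le_exp.mpr (by nlinarith [hz.2])
    have hz2 : (0:ℝ) ≤ z ^ (-(1/2):ℝ) := Real.rpow_nonneg hz0.le _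
    calc g z = z ^ ((1:ℝ)/2 - β) * z ^ (-(1/2):ℝ) * exp (μ * z) := by
          rw [hg]; simp only; rw [hsplit]
      _ ≤ y ^ ((1:ℝ)/2 - β) * z ^ (-(1/2):ℝ) * exp (μ * x) := by
          apply mul_le_mul (mul_le_mul_of_nonneg_right h1 hz2) h2 (exp_pos _).le
          positivity
      _ = (exp (μ * x) * y ^ ((1:ℝ)/2 - β)) * z ^ (-(1/2):ℝ) := by ring
  have hIb : IntegrableOn
      (fun z : ℝ => (exp (μ * x) * y ^ ((1:ℝ)/2 - β)) * z ^ (-(1/2):ℝ)) (Ioo y x) :=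
    (hhalf.mono_set (Ioo_subset_Ioo hy0.le le_rfl)).const_mul _
  have hstep1 : (∫ z in Ioo y x, g z)
      ≤ ∫ z in Ioo y x, (exp (μ * x) * y ^ ((1:ℝ)/2 - β)) * z ^ (-(1/2):ℝ) :=
    setIntegral_mono_on hgcont hIb measurableSet_Ioo hb1
  have hstep2 : (∫ z in Ioo y x, (exp (μ * x) * y ^ ((1:ℝ)/2 - β)) * z ^ (-(1/2):ℝ))
      = (exp (μ * x) * y ^ ((1:ℝ)/2 - β)) * ∫ z in Ioo y x, z ^ (-(1/2):ℝ) :=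
    integral_const_mul _ _
  have hstep3 : (∫ z in Ioo y x, z ^ (-(1/2):ℝ)) ≤ ∫ z in Ioo 0 x, z ^ (-(1/2):ℝ) := by
    apply setIntegral_mono_set hhalf
    · filter_upwards [ae_restrict_mem measurableSet_Ioo] with z hz
      exact Real.rpow_nonneg hz.1.le _
    · exact HasSubset.Subset.eventuallyLE (Ioo_subset_Ioo hy0.le le_rfl)
  have hstep4 : (∫ z in Ioo 0 x, z ^ (-(1/2):ℝ)) = 2 * x ^ ((1:ℝ)/2) := by
    rw [← integral_Ioc_eq_integral_Ioo, ← intervalIntegral.integral_of_le hx.le,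
      integral_rpow (Or.inl (by norm_num)), Real.zero_rpow (by norm_num)]
    norm_num
    ring
  have key : (∫ z in Ioo y x, g z) ≤ (exp (μ * x) * y ^ ((1:ℝ)/2 - β)) * (2 * x ^ ((1:ℝ)/2)) := by
    refine hstep1.trans ?_
    rw [hstep2]
    have hc : (0:ℝ) ≤ exp (μ * x) * y ^ ((1:ℝ)/2 - β) := by positivity
    exact mul_le_mul_of_nonneg_left (hstep3.trans_eq hstep4) hc
  have hI0 : 0 ≤ ∫ z in Ioo y x, g z := by
    apply setIntegral_nonneg measurableSet_Ioo
    intro z hz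
    have hz0 : 0 < z := lt_trans hy0 hz.1
    rw [hg]
    positivity
  have hyfac : (0:ℝ) ≤ y ^ (β - 1) * exp (-μ * y) := by positivity
  rw [Real.norm_eq_abs, abs_of_nonneg (mul_nonneg hI0 hyfac)]
  have hcomb : y ^ ((1:ℝ)/2 - β) * y ^ (β - 1) = y ^ (-(1/2):ℝ) := by
    rw [← Real.rpow_add hy0]; norm_num
  have hexp1 : exp (-μ * y) ≤ 1 := by
    rw [← Real.exp_zero]
    exact exp_le_exp.mpr (by nlinarith)
  calc (∫ z in Ioo y x, g z) * (y ^ (β - 1) * exp (-μ * y))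
      ≤ ((exp (μ * x) * y ^ ((1:ℝ)/2 - β)) * (2 * x ^ ((1:ℝ)/2))) * (y ^ (β - 1) * exp (-μ * y)) :=
        mul_le_mul_of_nonneg_right key hyfac
    _ = (C * y ^ (-(1/2):ℝ)) * exp (-μ * y) := by
        rw [hC, ← hcomb]; ring
    _ ≤ C * y ^ (-(1/2):ℝ) := by
        apply mul_le_of_le_one_right ?_ hexp1
        have : (0:ℝ) < C := by rw [hC]; positivity
        positivity
end
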